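/- arXiv:2604.04065 — 13 statements merged into one kernel-verified Lean document; each statement's English description precedes it below -/
import Mathlib

section
/- Let a and b be positive integers with a ∣ b. Then alcm_a b equals the product, over all primes p whose exponent in the prime factorization of b is strictly larger than its exponent in a, of p raised to its exponent in b. Equivalently, for every prime p, the exponent of p in alcm_a b equals the exponent of p in b if that exponent is strictly larger than the exponent of p in a, and equals 0 otherwise. -/
/-- The anti-lcm of `b` with respect to `a`: the smallest positive `c` with `lcm(a, c) = b`. -/
noncomputable def alcm (a b : ℕ) : ℕ := sInf {c : ℕ | 0 < c ∧ Nat.lcm a c = b}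

/-- for `0 < a ∣ b`, the exponent of each prime `p` in `alcm a b` is the
exponent of `p` in `b` when the latter is strictly larger than the exponent of `p` in `a`,
and `0` otherwise (i.e. `alcm a b = ∏_{e_b(p) > e_a(p)} p ^ e_b(p)`). -/
theorem alcm_factorization (a b : ℕ) (ha : 0 < a) (hb : 0 < b) (hab : a ∣ b) :
    ∀ p : ℕ, p.Prime →
      (alcm a b).factorization p =
        if a.factorization p < b.factorization p then b.factorization p else 0 := by
  set f : ℕ →₀ ℕ := b.factorization.filter
      (fun p => a.factorization p < b.factorization p) with hf
  have hfapp : ∀ p, f p = if a.factorization p < b.factorization p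
      then b.factorization p else 0 := by
    intro p; rw [hf, Finsupp.filter_apply]
  have hfsupp : ∀ p ∈ f.support, Nat.Prime p := by
    intro p hp
    have := Finsupp.support_filter (f := b.factorization)
      (p := fun p => a.factorization p < b.factorization p) ▸ hp
    exact Nat.prime_of_mem_primeFactors (Finset.filter_subset _ _ this)
  set c : ℕ := f.prod (· ^ ·) with hc
  have hcfact : c.factorization = f := Nat.prod_pow_factorization_eq_self hfsupp
  have hcpos : 0 < c := by
    rw [hc, Finsupp.prod]
    apply Finset.prod_pos
    intro p hp
    exact pow_pos (hfsupp p hp).pos _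
  have hale : a.factorization ≤ b.factorization :=
    (Nat.factorization_le_iff_dvd ha.ne' hb.ne').mpr hab
  have hlcm : Nat.lcm a c = b := by
    have h1 : (Nat.lcm a c).factorization = b.factorization := by
      rw [Nat.factorization_lcm ha.ne' hcpos.ne', hcfact]
      ext p
      rw [Finsupp.sup_apply, hfapp p]
      by_cases h : a.factorization p < b.factorization p
      · simp [h, le_of_lt h]
      · have : a.factorization p = b.factorization p := le_antisymm (hale p) (not_lt.mp h)
        simp [h, this]
    exact Nat.factorization_inj (by simp [Nat.lcm_ne_zero ha.ne' hcpos.ne'])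
      (by simp [hb.ne']) h1
  have hcmem : c ∈ {c : ℕ | 0 < c ∧ Nat.lcm a c = b} := ⟨hcpos, hlcm⟩
  have hne : {c : ℕ | 0 < c ∧ Nat.lcm a c = b}.Nonempty := ⟨c, hcmem⟩
  have hmem := Nat.sInf_mem hne
  obtain ⟨hapos, halcm⟩ := hmem
  -- c divides alcm a b
  have hdvd : c ∣ alcm a b := by
    unfold alcm
    rw [← Nat.factorization_le_iff_dvd hcpos.ne' hapos.ne', hcfact]
    intro p
    rw [hfapp p]
    by_cases h : a.factorization p < b.factorization p
    · simp only [h, if_true]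
      have : b.factorization p =
          (a.factorization ⊔ (sInf {c : ℕ | 0 < c ∧ Nat.lcm a c = b}).factorization) p := by
        rw [← Nat.factorization_lcm ha.ne' hapos.ne', halcm]
      rw [Finsupp.sup_apply] at this
      rcases le_or_gt (b.factorization p)
        ((sInf {c : ℕ | 0 < c ∧ Nat.lcm a c = b}).factorization p) with h2 | h2
      · exact h2
      · omega
    · simp [h]
  have hle : alcm a b ≤ c := Nat.sInf_le hcmem
  have heq : alcm a b = c := le_antisymm hle (Nat.le_of_dvd hapos hdvd)
  intro p _
  rw [heq, hcfact, hfapp p]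
end

section
/- Let a, b, c be positive integers with lcm(a, c) = b (so in particular a ∣ b). Then alcm_a b divides c, the quotient c / alcm_a b divides a, and c / alcm_a b is coprime with alcm_a b. -/
/-- if `lcm(a, c) = b` (with `a, b, c` positive), then `alcm a b ∣ c`,
the quotient `c / alcm a b` divides `a`, and it is coprime with `alcm a b`. -/
theorem div_alcm_dvd_and_coprime (a b c : ℕ) (ha : 0 < a) (hb : 0 < b) (hc : 0 < c)
    (h : Nat.lcm a c = b) :
    alcm a b ∣ c ∧ (c / alcm a b) ∣ a ∧ Nat.Coprime (c / alcm a b) (alcm a b) := by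
  have hcS : c ∈ {c : ℕ | 0 < c ∧ Nat.lcm a c = b} := ⟨hc, h⟩
  have hmem : alcm a b ∈ {c : ℕ | 0 < c ∧ Nat.lcm a c = b} := Nat.sInf_mem ⟨c, hcS⟩
  obtain ⟨hm0, hmlcm⟩ := hmem
  set m := alcm a b with hmdef
  have ha0 : a ≠ 0 := ha.ne'
  have hb0 : b ≠ 0 := hb.ne'
  have hc0 : c ≠ 0 := hc.ne'
  have hm0' : m ≠ 0 := hm0.ne'
  -- factorization facts
  have hfc : ∀ p : ℕ, max (a.factorization p) (c.factorization p) = b.factorization p := by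
    intro p
    have := Nat.factorization_lcm ha0 hc0
    rw [h] at this
    have := DFunLike.congr_fun this p
    simpa using this.symm
  have hfm : ∀ p : ℕ, max (a.factorization p) (m.factorization p) = b.factorization p := by
    intro p
    have := Nat.factorization_lcm ha0 hm0'
    rw [hmlcm] at this
    have := DFunLike.congr_fun this p
    simpa using this.symm
  have hab : ∀ p : ℕ, a.factorization p ≤ b.factorization p := fun p => by
    rw [← hfc p]; exact le_max_left _ _
  have hcb : ∀ p : ℕ, c.factorization p ≤ b.factorization p := fun p => by
    rw [← hfc p]; exact le_max_right _ _
  -- key minimality fact: if m.factorization p ≠ 0 then a.factorization p < b.factorization p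
  have key : ∀ p : ℕ, p.Prime → m.factorization p ≠ 0 →
      a.factorization p < b.factorization p := by
    intro p hp hne
    by_contra hle
    push_neg at hle
    have haeq : a.factorization p = b.factorization p := le_antisymm (hab p) hle
    -- consider m' = ordCompl[p] m, which is a smaller element of the set
    have hm'pos : 0 < ordCompl[p] m := Nat.ordCompl_pos p hm0'
    have hm'lcm : Nat.lcm a (ordCompl[p] m) = b := by
      apply Nat.eq_of_factorization_eq (Nat.lcm_ne_zero ha0 hm'pos.ne') hb0
      intro q
      rw [Nat.factorization_lcm ha0 hm'pos.ne']
      rcases eq_or_ne q p with rfl | hqp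
      · simp [Nat.factorization_ordCompl, haeq]
      · have := hfm q
        simp only [Finsupp.sup_apply, Nat.factorization_ordCompl,
          Finsupp.erase_ne hqp]
        simpa using this
    have hlt : ordCompl[p] m < m := by
      apply Nat.div_lt_self hm0
      exact Nat.one_lt_pow hne hp.one_lt
    have := Nat.sInf_le (show ordCompl[p] m ∈ {c : ℕ | 0 < c ∧ Nat.lcm a c = b} from ⟨hm'pos, hm'lcm⟩)
    exact absurd (this.trans_lt hlt) (lt_irrefl m)
  -- if m.factorization p ≠ 0 then m.factorization p = b.factorization p
  have hmeq : ∀ p : ℕ, m.factorization p ≠ 0 → m.factorization p = b.factorization p := by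
    intro p hne
    have hprime : p.Prime := Nat.prime_of_mem_primeFactors
      (by rw [← Nat.support_factorization]; exact Finsupp.mem_support_iff.mpr hne)
    have := key p hprime hne
    have := hfm p
    omega
  -- m ∣ c
  have hmc : m ∣ c := by
    rw [← Nat.factorization_le_iff_dvd hm0' hc0, Finsupp.le_def]
    intro p
    rcases eq_or_ne (m.factorization p) 0 with h0 | hne
    · simp [h0]
    · have hprime : p.Prime := Nat.prime_of_mem_primeFactors
        (by rw [← Nat.support_factorization]; exact Finsupp.mem_support_iff.mpr hne)
      have h1 := hmeq p hne
      have h2 := key p hprime hne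
      have h3 := hfc p
      omega
  have hq0 : c / m ≠ 0 := (Nat.div_pos (Nat.le_of_dvd hc hmc) hm0).ne'
  have hqfact : ∀ p : ℕ, (c / m).factorization p = c.factorization p - m.factorization p := by
    intro p
    rw [Nat.factorization_div hmc]
    simp
  refine ⟨hmc, ?_, ?_⟩
  · -- c / m ∣ a
    rw [← Nat.factorization_le_iff_dvd hq0 ha0, Finsupp.le_def]
    intro p
    rw [hqfact p]
    rcases eq_or_ne (m.factorization p) 0 with h0 | hne
    · -- then c.factorization p ≤ a.factorization p
      have h1 := hfm p
      have h2 := hfc p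
      omega
    · have h1 := hmeq p hne
      have h2 := hcb p
      omega
  · -- coprimality
    have hg0 : Nat.gcd (c / m) m ≠ 0 := Nat.gcd_ne_zero_right hm0'
    rw [Nat.Coprime]
    apply Nat.eq_of_factorization_eq hg0 one_ne_zero
    intro p
    rw [Nat.factorization_gcd hq0 hm0', Nat.factorization_one]
    simp only [Finsupp.inf_apply, Finsupp.coe_zero, Pi.zero_apply]
    rw [hqfact p]
    rcases eq_or_ne (m.factorization p) 0 with h0 | hne
    · simp [h0]
    · have h1 := hmeq p hne
      have h2 := hcb p
      omega
end

section
/- Let a and b be positive integers with a ∣ b, and let k be a natural number such that for every prime p the exponent of p in the prime factorization of b is at most k. Then alcm_a b = gcd((b/a)^k, b). -/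
/-- if `0 < a ∣ b` and every prime exponent of `b` is at most `k`, then
`alcm a b = gcd((b/a)^k, b)`. -/
theorem alcm_eq_gcd_pow (a b k : ℕ) (ha : 0 < a) (hb : 0 < b) (hab : a ∣ b)
    (hk : ∀ p : ℕ, p.Prime → b.factorization p ≤ k) :
    alcm a b = Nat.gcd ((b / a) ^ k) b := by
  set c₀ := Nat.gcd ((b / a) ^ k) b with hc₀
  have hc₀pos : 0 < c₀ := Nat.gcd_pos_of_pos_right _ hb
  have hba : 0 < b / a := Nat.div_pos (Nat.le_of_dvd hb hab) ha
  have hab' : a ≤ b := Nat.le_of_dvd hb hab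
  -- factorization of c₀ at a prime p
  have hfc₀ : ∀ p : ℕ, p.Prime →
      c₀.factorization p = min (k * (b.factorization p - a.factorization p)) (b.factorization p) := by
    intro p hp
    rw [hc₀, Nat.factorization_gcd (pow_ne_zero _ hba.ne') hb.ne']
    simp [Nat.factorization_pow, Nat.factorization_div hab]
  have hle : ∀ p : ℕ, a.factorization p ≤ b.factorization p :=
    fun p => (Nat.factorization_le_iff_dvd ha.ne' hb.ne').mpr hab p
  -- c₀ is in the set
  have hmem : c₀ ∈ {c : ℕ | 0 < c ∧ Nat.lcm a c = b} := by
    refine ⟨hc₀pos, ?_⟩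
    have hlcm0 : Nat.lcm a c₀ ≠ 0 := Nat.lcm_ne_zero ha.ne' hc₀pos.ne'
    apply Nat.eq_of_factorization_eq hlcm0 hb.ne'
    intro p
    by_cases hp : p.Prime
    · rw [Nat.factorization_lcm ha.ne' hc₀pos.ne']
      simp only [Finsupp.sup_apply]
      rw [hfc₀ p hp]
      have h1 := hle p
      have h2 := hk p hp
      rcases lt_or_eq_of_le h1 with h | h
      · have : b.factorization p ≤ k * (b.factorization p - a.factorization p) := by
          calc b.factorization p ≤ k := h2
          _ = k * 1 := (mul_one k).symm
          _ ≤ k * (b.factorization p - a.factorization p) :=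
            Nat.mul_le_mul_left k (by omega)
        omega
      · omega
    · simp [Nat.factorization_eq_zero_of_not_prime _ hp]
  have hne : Set.Nonempty {c : ℕ | 0 < c ∧ Nat.lcm a c = b} := ⟨c₀, hmem⟩
  -- c₀ divides every member
  have hdvd : ∀ c ∈ {c : ℕ | 0 < c ∧ Nat.lcm a c = b}, c₀ ∣ c := by
    rintro c ⟨hc, hlcm⟩
    refine (Nat.factorization_le_iff_dvd hc₀pos.ne' hc.ne').mp (Finsupp.le_def.mpr fun p => ?_)
    by_cases hp : p.Prime
    · rw [hfc₀ p hp]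
      have hmax : max (a.factorization p) (c.factorization p) = b.factorization p := by
        have h2 : (Nat.lcm a c).factorization p = b.factorization p := by rw [hlcm]
        rw [Nat.factorization_lcm ha.ne' hc.ne'] at h2
        simpa using h2
      have h1 := hle p
      rcases lt_or_eq_of_le h1 with h | h
      · omega
      · have h0 : b.factorization p - a.factorization p = 0 := by omega
        rw [h0, mul_zero]
        simp
    · simp [Nat.factorization_eq_zero_of_not_prime _ hp]
  have hmemInf := Nat.sInf_mem hne
  exact le_antisymm (Nat.sInf_le hmem)
    (Nat.le_of_dvd (hmemInf.1) (hdvd _ hmemInf))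
end

section
/- Let a and b be positive integers with a ∣ b, and define f : ℕ → ℕ by f(x) = gcd(b, x²). Then for every natural number n and every prime p, the exponent of p in the prime factorization of the n-th iterate f^[n](b/a) equals min(e_b(p), 2^n · (e_b(p) − e_a(p))), where e_a(p) and e_b(p) denote the exponents of p in the prime factorizations of a and b respectively. -/
/-- for `0 < a ∣ b` and `f x = gcd(b, x²)`, the exponent of each prime `p` in
`f^[n](b/a)` equals `min(e_b(p), 2^n · (e_b(p) − e_a(p)))`. -/
theorem iterate_gcd_sq_factorization (a b : ℕ) (ha : 0 < a) (hb : 0 < b) (hab : a ∣ b) :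
    ∀ (n : ℕ) (p : ℕ), p.Prime →
      ((fun x => Nat.gcd b (x ^ 2))^[n] (b / a)).factorization p =
        min (b.factorization p) (2 ^ n * (b.factorization p - a.factorization p)) := by
  have hba : 0 < b / a := Nat.div_pos (Nat.le_of_dvd hb hab) ha
  have hpos : ∀ n, 0 < (fun x => Nat.gcd b (x ^ 2))^[n] (b / a) := by
    intro n
    induction n with
    | zero => simpa using hba
    | succ n ih =>
      rw [Function.iterate_succ_apply']
      exact Nat.gcd_pos_of_pos_left _ hb
  intro n
  induction n with
  | zero =>
    intro p hp
    have h := Nat.factorization_div hab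
    have hle : a.factorization p ≤ b.factorization p :=
      (Nat.factorization_le_iff_dvd ha.ne' hb.ne').2 hab p
    simp only [Function.iterate_zero_apply, h, Finsupp.tsub_apply, pow_zero, one_mul]
    omega
  | succ n ih =>
    intro p hp
    rw [Function.iterate_succ_apply']
    have hy := hpos n
    set y := (fun x => Nat.gcd b (x ^ 2))^[n] (b / a) with hyd
    have : (Nat.gcd b (y ^ 2)).factorization p =
        min (b.factorization p) (2 * y.factorization p) := by
      rw [Nat.factorization_gcd hb.ne' (pow_ne_zero 2 hy.ne'), Nat.factorization_pow]
      simp [Finsupp.inf_apply, two_mul, mul_comm]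
    rw [this, ih p hp]
    have h2 : (2:ℕ) ^ (n+1) * (b.factorization p - a.factorization p)
        = 2 * (2 ^ n * (b.factorization p - a.factorization p)) := by ring
    omega
end

section
/- Let a and b be positive integers with a ∣ b, and define f : ℕ → ℕ by f(x) = gcd(b, x²). If n is a natural number such that 2^n ≥ e_b(p) for every prime p, where e_b(p) denotes the exponent of p in the prime factorization of b, then the n-th iterate satisfies f^[n](b/a) = alcm_a b. -/
/-- for `0 < a ∣ b` and `f x = gcd(b, x²)`, if `2^n` bounds every prime
exponent of `b`, then `f^[n](b/a) = alcm a b`. -/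
theorem iterate_gcd_sq_eq_alcm (a b n : ℕ) (ha : 0 < a) (hb : 0 < b) (hab : a ∣ b)
    (hn : ∀ p : ℕ, p.Prime → b.factorization p ≤ 2 ^ n) :
    (fun x => Nat.gcd b (x ^ 2))^[n] (b / a) = alcm a b := by
  set f : ℕ → ℕ := fun x => Nat.gcd b (x ^ 2) with hf
  -- key invariant on iterates
  have key : ∀ k x, 0 < x → x ∣ b →
      0 < f^[k] x ∧ f^[k] x ∣ b ∧
      ∀ p, (f^[k] x).factorization p =
        min (b.factorization p) (2 ^ k * x.factorization p) := by
    intro k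
    induction k with
    | zero =>
      intro x hx hxb
      refine ⟨hx, hxb, fun p => ?_⟩
      have hle : x.factorization p ≤ b.factorization p :=
        (Nat.factorization_le_iff_dvd hx.ne' hb.ne').mpr hxb p
      simp [min_eq_right hle]
    | succ k ih =>
      intro x hx hxb
      obtain ⟨hy, hyb, hfac⟩ := ih x hx hxb
      set y := f^[k] x with hy'
      have hfy : f^[k+1] x = Nat.gcd b (y ^ 2) := by
        rw [Function.iterate_succ_apply']
      have hpos : 0 < Nat.gcd b (y ^ 2) := Nat.gcd_pos_of_pos_left _ hb
      refine ⟨by rw [hfy]; exact hpos, by rw [hfy]; exact Nat.gcd_dvd_left _ _, fun p => ?_⟩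
      have hgcd : (Nat.gcd b (y ^ 2)).factorization p =
          min (b.factorization p) ((y ^ 2).factorization p) := by
        rw [Nat.factorization_gcd hb.ne' (pow_ne_zero 2 hy.ne')]
        rfl
      have hsq : (y ^ 2).factorization p = 2 * y.factorization p := by
        rw [Nat.factorization_pow]; rfl
      rw [hfy, hgcd, hsq, hfac p]
      have hm : 2 ^ (k + 1) * x.factorization p = 2 * (2 ^ k * x.factorization p) := by
        ring
      rw [hm]
      omega
  have hx0 : 0 < b / a := Nat.div_pos (Nat.le_of_dvd hb hab) ha
  have hxb : b / a ∣ b := Nat.div_dvd_of_dvd hab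
  obtain ⟨hy, hyb, hfac⟩ := key n (b / a) hx0 hxb
  set y := f^[n] (b / a) with hy'
  have hdivfac : ∀ p, (b / a).factorization p = b.factorization p - a.factorization p := by
    intro p
    rw [Nat.factorization_div hab]
    rfl
  have hab' : ∀ p, a.factorization p ≤ b.factorization p :=
    fun p => (Nat.factorization_le_iff_dvd ha.ne' hb.ne').mpr hab p
  -- y's factorization, explicitly
  have hyfac : ∀ p, y.factorization p =
      min (b.factorization p) (2 ^ n * (b.factorization p - a.factorization p)) := by
    intro p; rw [hfac p, hdivfac p]
  -- lcm a y = b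
  have hlcm : Nat.lcm a y = b := by
    have hpos : Nat.lcm a y ≠ 0 := Nat.lcm_ne_zero ha.ne' hy.ne'
    apply Nat.factorization_inj (by simpa using hpos) (by simpa using hb.ne')
    ext p
    rw [Nat.factorization_lcm ha.ne' hy.ne']
    show max (a.factorization p) (y.factorization p) = b.factorization p
    rw [hyfac p]
    by_cases hp : p.Prime
    · have hB := hn p hp
      have hA := hab' p
      rcases eq_or_lt_of_le hA with h | h
      · rw [← h]; simp
      · have : 2 ^ n ≤ 2 ^ n * (b.factorization p - a.factorization p) :=
          Nat.le_mul_of_pos_right _ (by omega)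
        omega
    · simp [Nat.factorization_eq_zero_of_not_prime _ hp]
  -- minimality
  have hmin : ∀ c, 0 < c → Nat.lcm a c = b → y ∣ c := by
    intro c hc hlc
    rw [← Nat.factorization_le_iff_dvd hy.ne' hc.ne']
    rw [Finsupp.le_def]
    intro p
    by_cases hp : p.Prime
    · have hmx : max (a.factorization p) (c.factorization p) = b.factorization p := by
        have := congrArg Nat.factorization hlc
        rw [Nat.factorization_lcm ha.ne' hc.ne'] at this
        exact DFunLike.congr_fun this p
      rw [hyfac p]
      rcases eq_or_lt_of_le (hab' p) with h | h
      · rw [← h]; simp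
      · have hcp : c.factorization p = b.factorization p := by omega
        omega
    · simp [Nat.factorization_eq_zero_of_not_prime _ hp]
  -- conclude
  have hmem : y ∈ {c : ℕ | 0 < c ∧ Nat.lcm a c = b} := ⟨hy, hlcm⟩
  have hne : {c : ℕ | 0 < c ∧ Nat.lcm a c = b}.Nonempty :=
    ⟨b, hb, Nat.dvd_antisymm (Nat.lcm_dvd hab dvd_rfl) (Nat.dvd_lcm_right a b)⟩
  refine le_antisymm ?_ (Nat.sInf_le hmem)
  apply le_csInf hne
  rintro c ⟨hc, hlc⟩
  exact Nat.le_of_dvd hc (hmin c hc hlc)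
end

section
/- For every positive integer p, the map D_p sending a permutation S to the submultiset of its elements that divide p is a semiring endomorphism of the semiring of permutations: D_p of the empty multiset is empty, D_p({1}) = {1}, D_p(A + B) = D_p(A) + D_p(B), and D_p(A·B) = D_p(A)·D_p(B) for all permutations A and B. -/
/-- Product of permutations (multisets of cycle lengths): each pair `(a, b)` contributes
`gcd(a, b)` copies of `lcm(a, b)`. -/
def pmul (A B : Multiset ℕ) : Multiset ℕ :=
  A.bind fun a => B.bind fun b => Multiset.replicate (Nat.gcd a b) (Nat.lcm a b)

/-- A permutation is a multiset of positive natural numbers (cycle lengths). -/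
def IsPerm (A : Multiset ℕ) : Prop := ∀ x ∈ A, 0 < x

/-- `dfil p A` is the submultiset of elements of `A` dividing `p`. -/
def dfil (p : ℕ) (A : Multiset ℕ) : Multiset ℕ := A.filter (· ∣ p)

lemma dfil_inner (p a : ℕ) (B : Multiset ℕ) :
    dfil p (B.bind fun b => Multiset.replicate (Nat.gcd a b) (Nat.lcm a b)) =
      if a ∣ p then (dfil p B).bind fun b => Multiset.replicate (Nat.gcd a b) (Nat.lcm a b)
      else 0 := by
  induction B using Multiset.induction with
  | empty => simp [dfil]
  | cons b B ih =>
    rw [Multiset.cons_bind, dfil, Multiset.filter_add, ← dfil, ← dfil, ih]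
    have hrep : Multiset.filter (· ∣ p) (Multiset.replicate (Nat.gcd a b) (Nat.lcm a b)) =
        if Nat.lcm a b ∣ p then Multiset.replicate (Nat.gcd a b) (Nat.lcm a b) else 0 := by
      split <;> rename_i h
      · exact Multiset.filter_eq_self.2 fun x hx => by
          rw [Multiset.eq_of_mem_replicate hx]; exact h
      · exact Multiset.filter_eq_nil.2 fun x hx => by
          rw [Multiset.eq_of_mem_replicate hx]; exact h
    rw [dfil, hrep]
    by_cases ha : a ∣ p <;> by_cases hb : b ∣ p <;>
      simp [ha, hb, Nat.lcm_dvd_iff, dfil, Multiset.filter_cons_of_pos,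
        Multiset.filter_cons_of_neg, Multiset.cons_bind]

lemma dfil_pmul (p : ℕ) (A B : Multiset ℕ) :
    dfil p (pmul A B) = pmul (dfil p A) (dfil p B) := by
  induction A using Multiset.induction with
  | empty => simp [pmul, dfil]
  | cons a A ih =>
    rw [pmul, Multiset.cons_bind, dfil, Multiset.filter_add, ← dfil, ← dfil, dfil_inner, ← pmul, ih]
    by_cases ha : a ∣ p <;>
      simp [ha, dfil, Multiset.filter_cons_of_pos, Multiset.filter_cons_of_neg, pmul,
        Multiset.cons_bind]

/-- for every positive `p`, the map `D_p` keeping only the cycle lengths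
dividing `p` is a semiring endomorphism of the semiring of permutations. -/
theorem dfil_semiring_hom (p : ℕ) (hp : 0 < p) :
    dfil p 0 = 0 ∧ dfil p {1} = {1} ∧
    (∀ A B : Multiset ℕ, IsPerm A → IsPerm B → dfil p (A + B) = dfil p A + dfil p B) ∧
    (∀ A B : Multiset ℕ, IsPerm A → IsPerm B →
      dfil p (pmul A B) = pmul (dfil p A) (dfil p B)) := by
  refine ⟨by simp [dfil], ?_, fun A B _ _ => Multiset.filter_add _ A B,
    fun A B _ _ => dfil_pmul p A B⟩
  simp [dfil, Multiset.filter_singleton, Nat.one_dvd]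
end

section
/- Let X be a nonempty permutation with elements listed in nondecreasing order x_1 ≤ x_2 ≤ … ≤ x_m, let k > 0 be an integer and let 0 ≤ i < m. Then (pref_i(X))^k is a submultiset of X^k, and the minimum element of the multiset difference X^k − (pref_i(X))^k equals x_{i+1}. -/
/-- Powers in the permutation semiring; `X^0` is the singleton `{1}`. -/
def ppow (A : Multiset ℕ) : ℕ → Multiset ℕ
  | 0 => {1}
  | n + 1 => pmul A (ppow A n)

lemma bind_mono_left {A B : Multiset ℕ} (f : ℕ → Multiset ℕ) (h : A ≤ B) :
    A.bind f ≤ B.bind f := by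
  obtain ⟨C, rfl⟩ := Multiset.le_iff_exists_add.mp h
  rw [Multiset.add_bind]; exact le_add_right (le_refl _)

lemma bind_mono_right (A : Multiset ℕ) {f g : ℕ → Multiset ℕ} (h : ∀ a ∈ A, f a ≤ g a) :
    A.bind f ≤ A.bind g := by
  induction A using Multiset.induction with
  | empty => simp
  | cons a s ih =>
    rw [Multiset.cons_bind, Multiset.cons_bind]
    exact add_le_add (h a (Multiset.mem_cons_self a s))
      (ih fun b hb => h b (Multiset.mem_cons_of_mem hb))

lemma pmul_mono {A B C D : Multiset ℕ} (h1 : A ≤ B) (h2 : C ≤ D) :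
    pmul A C ≤ pmul B D :=
  le_trans (bind_mono_right A fun _ _ => bind_mono_left _ h2) (bind_mono_left _ h1)

lemma ppow_mono {A B : Multiset ℕ} (h : A ≤ B) (k : ℕ) : ppow A k ≤ ppow B k := by
  induction k with
  | zero => exact le_refl _
  | succ n ih => exact pmul_mono h ih

lemma mem_pmul {A B : Multiset ℕ} {y : ℕ} :
    y ∈ pmul A B ↔ ∃ a ∈ A, ∃ b ∈ B, Nat.gcd a b ≠ 0 ∧ y = Nat.lcm a b := by
  simp only [pmul, Multiset.mem_bind, Multiset.mem_replicate]

lemma ppow_pos {A : Multiset ℕ} (hA : ∀ a ∈ A, 0 < a) (k : ℕ) :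
    ∀ y ∈ ppow A k, 0 < y := by
  induction k with
  | zero => intro y hy; simp only [ppow, Multiset.mem_singleton] at hy; omega
  | succ n ih =>
    intro y hy
    obtain ⟨a, ha, b, hb, _, rfl⟩ := mem_pmul.mp hy
    exact Nat.pos_of_ne_zero (Nat.lcm_ne_zero (hA a ha).ne' (ih b hb).ne')

lemma pmul_add_left (A B C : Multiset ℕ) : pmul (A + B) C = pmul A C + pmul B C := by
  simp [pmul, Multiset.add_bind]

lemma pmul_add_right (A B C : Multiset ℕ) : pmul A (B + C) = pmul A B + pmul A C := by
  simp [pmul, Multiset.add_bind, Multiset.bind_add]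

lemma ppow_one' (A : Multiset ℕ) : ppow A 1 = A := by
  show pmul A {1} = A
  have : (fun a => Multiset.replicate (Nat.gcd a 1) (Nat.lcm a 1)) = fun a => ({a} : Multiset ℕ) := by
    funext a; simp [Nat.gcd_one_right, Nat.lcm_one_right]
  rw [pmul]
  simp only [Multiset.singleton_bind]
  rw [this, Multiset.bind_singleton, Multiset.map_id']

lemma ppow_superadd (A B : Multiset ℕ) (n : ℕ) :
    ppow A (n + 1) + ppow B (n + 1) ≤ ppow (A + B) (n + 1) := by
  induction n with
  | zero => rw [ppow_one', ppow_one', ppow_one']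
  | succ m ih =>
    show ppow A (m+2) + ppow B (m+2) ≤ pmul (A + B) (ppow (A + B) (m + 1))
    calc ppow A (m+2) + ppow B (m+2)
        = pmul A (ppow A (m+1)) + pmul B (ppow B (m+1)) := rfl
      _ ≤ (pmul A (ppow A (m+1)) + pmul A (ppow B (m+1))) +
          (pmul B (ppow A (m+1)) + pmul B (ppow B (m+1))) :=
          add_le_add (le_add_right (le_refl _)) le_add_self
      _ = pmul (A + B) (ppow A (m+1) + ppow B (m+1)) := by
          rw [pmul_add_left, pmul_add_right, pmul_add_right]
      _ ≤ pmul (A + B) (ppow (A + B) (m+1)) := pmul_mono (le_refl _) ih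

lemma mem_ppow_singleton {x : ℕ} (hx : 0 < x) (n : ℕ) : x ∈ ppow {x} (n + 1) := by
  induction n with
  | zero =>
    rw [ppow_one']; exact Multiset.mem_singleton_self x
  | succ m ih =>
    refine mem_pmul.mpr ⟨x, Multiset.mem_singleton_self x, x, ih, ?_, ?_⟩
    · simpa [Nat.gcd_self] using hx.ne'
    · simp [Nat.lcm_self]

lemma filter_pmul_big_left {A B : Multiset ℕ} {x : ℕ}
    (hA : ∀ a ∈ A, x ≤ a) (hB : ∀ b ∈ B, 0 < b) (hx : 0 < x) :
    (pmul A B).filter (· < x) = 0 := by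
  rw [Multiset.filter_eq_nil]
  intro y hy
  obtain ⟨a, ha, b, hb, _, rfl⟩ := mem_pmul.mp hy
  have h1 : a ∣ Nat.lcm a b := Nat.dvd_lcm_left a b
  have h2 : Nat.lcm a b ≠ 0 := Nat.lcm_ne_zero (by have := hA a ha; omega) (hB b hb).ne'
  have : a ≤ Nat.lcm a b := Nat.le_of_dvd (Nat.pos_of_ne_zero h2) h1
  have := hA a ha
  omega

lemma filter_pmul_big_right {A B : Multiset ℕ} {x : ℕ}
    (hA : ∀ a ∈ A, 0 < a) (hB : ∀ b ∈ B, x ≤ b) (hx : 0 < x) :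
    (pmul A B).filter (· < x) = 0 := by
  rw [Multiset.filter_eq_nil]
  intro y hy
  obtain ⟨a, ha, b, hb, _, rfl⟩ := mem_pmul.mp hy
  have h1 : b ∣ Nat.lcm a b := Nat.dvd_lcm_right a b
  have h2 : Nat.lcm a b ≠ 0 := Nat.lcm_ne_zero (hA a ha).ne' (by have := hB b hb; omega)
  have : b ≤ Nat.lcm a b := Nat.le_of_dvd (Nat.pos_of_ne_zero h2) h1
  have := hB b hb
  omega

lemma filter_pmul {A B : Multiset ℕ} {x : ℕ}
    (hA : ∀ a ∈ A, 0 < a) (hB : ∀ b ∈ B, 0 < b) (hx : 0 < x) :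
    (pmul A B).filter (· < x) =
      (pmul (A.filter (· < x)) (B.filter (· < x))).filter (· < x) := by
  have hAsplit : A.filter (· < x) + A.filter (fun a => ¬ a < x) = A :=
    Multiset.filter_add_not _ A
  have hBsplit : B.filter (· < x) + B.filter (fun a => ¬ a < x) = B :=
    Multiset.filter_add_not _ B
  have hz1 : (pmul (A.filter (fun a => ¬ a < x)) B).filter (· < x) = 0 :=
    filter_pmul_big_left (fun a ha => by have := Multiset.of_mem_filter ha; omega) hB hx
  have hz2 : (pmul (A.filter (· < x)) (B.filter (fun a => ¬ a < x))).filter (· < x) = 0 :=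
    filter_pmul_big_right (fun a ha => hA a (Multiset.mem_of_mem_filter ha))
      (fun b hb => by have := Multiset.of_mem_filter hb; omega) hx
  conv_lhs => rw [← hAsplit]
  rw [pmul_add_left, Multiset.filter_add, hz1, add_zero]
  conv_lhs => rw [← hBsplit]
  rw [pmul_add_right, Multiset.filter_add, hz2, add_zero]

lemma filter_ppow_eq {A B : Multiset ℕ} {x : ℕ}
    (hA : ∀ a ∈ A, 0 < a) (hB : ∀ b ∈ B, 0 < b) (hx : 0 < x)
    (h : A.filter (· < x) = B.filter (· < x)) (k : ℕ) :
    (ppow A k).filter (· < x) = (ppow B k).filter (· < x) := by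
  induction k with
  | zero => rfl
  | succ n ih =>
    show (pmul A (ppow A n)).filter (· < x) = (pmul B (ppow B n)).filter (· < x)
    rw [filter_pmul hA (ppow_pos hA n) hx, filter_pmul hB (ppow_pos hB n) hx, h, ih]

/-- let `X` be a nonempty permutation whose elements, in nondecreasing order,
are given by the sorted list `l` (so `x_{i+1} = l.get i`), let `k > 0` and `i < m`.
Then `(pref_i X)^k` is a submultiset of `X^k`, and the minimum element of the multiset
difference `X^k − (pref_i X)^k` is `x_{i+1}`. -/
theorem ppow_prefix_min (l : List ℕ) (hl : l.Pairwise (· ≤ ·)) (hpos : ∀ x ∈ l, 0 < x)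
    (k : ℕ) (hk : 0 < k) (i : ℕ) (hi : i < l.length) :
    ppow (↑(l.take i)) k ≤ ppow (↑l) k ∧
    l.get ⟨i, hi⟩ ∈ ppow (↑l) k - ppow (↑(l.take i)) k ∧
    ∀ y ∈ ppow (↑l) k - ppow (↑(l.take i)) k, l.get ⟨i, hi⟩ ≤ y := by
  set x := l.get ⟨i, hi⟩ with hxdef
  have hx : 0 < x := hpos x (l.get_mem _)
  have hsplit : (↑l : Multiset ℕ) = ↑(l.take i) + ↑(l.drop i) := by
    rw [Multiset.coe_add, List.take_append_drop]
  have hPle : (↑(l.take i) : Multiset ℕ) ≤ ↑l := by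
    rw [hsplit]; exact le_add_right (le_refl _)
  have hdrop : l.drop i = x :: l.drop (i + 1) := by
    rw [List.drop_eq_getElem_cons hi]; rfl
  have hxD : x ∈ (↑(l.drop i) : Multiset ℕ) :=
    Multiset.mem_coe.mpr (by rw [hdrop]; exact List.mem_cons_self)
  have hPx : (↑(l.take i) : Multiset ℕ) + {x} ≤ ↑l := by
    rw [hsplit]
    exact add_le_add (le_refl _) (Multiset.singleton_le.mpr hxD)
  obtain ⟨n, rfl⟩ : ∃ n, k = n + 1 := ⟨k - 1, by omega⟩
  have h1 : ppow (↑(l.take i)) (n + 1) ≤ ppow (↑l) (n + 1) := ppow_mono hPle _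
  have hcount : Multiset.count x (ppow (↑(l.take i)) (n+1)) + 1 ≤
      Multiset.count x (ppow (↑l) (n+1)) := by
    have h2 : ppow (↑(l.take i)) (n+1) + ppow ({x} : Multiset ℕ) (n+1) ≤
        ppow ((↑(l.take i) : Multiset ℕ) + {x}) (n+1) := ppow_superadd _ _ n
    have h3 := le_trans h2 (ppow_mono hPx (n+1))
    have h4 := Multiset.count_le_of_le x h3
    rw [Multiset.count_add] at h4
    have h5 : 1 ≤ Multiset.count x (ppow ({x} : Multiset ℕ) (n+1)) :=
      Multiset.one_le_count_iff_mem.mpr (mem_ppow_singleton hx n)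
    omega
  have hmem : x ∈ ppow (↑l) (n+1) - ppow (↑(l.take i)) (n+1) := by
    rw [← Multiset.count_pos, Multiset.count_sub]
    omega
  refine ⟨h1, hmem, ?_⟩
  intro y hy
  by_contra hyx
  push_neg at hyx
  have hfl : (↑l : Multiset ℕ).filter (· < x) = (↑(l.take i) : Multiset ℕ).filter (· < x) := by
    rw [hsplit, Multiset.filter_add]
    have hzero : (↑(l.drop i) : Multiset ℕ).filter (· < x) = 0 := by
      rw [Multiset.filter_eq_nil]
      intro b hb
      have hbmem : b ∈ l.drop i := by exact_mod_cast hb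
      have hxb : x ≤ b := by
        rw [hdrop] at hbmem
        rcases List.mem_cons.mp hbmem with rfl | hbm
        · exact le_refl _
        · have hsorted : (l.drop i).Pairwise (· ≤ ·) := hl.drop
          rw [hdrop] at hsorted
          exact (List.pairwise_cons.mp hsorted).1 b hbm
      omega
    rw [hzero, add_zero]
  have hposP : ∀ a ∈ (↑(l.take i) : Multiset ℕ), 0 < a := fun a ha =>
    hpos a (List.mem_of_mem_take (by exact_mod_cast ha))
  have heq := filter_ppow_eq (fun a ha => hpos a (by exact_mod_cast ha)) hposP hx hfl (n+1)
  have hcy : Multiset.count y (ppow (↑l) (n+1)) =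
      Multiset.count y (ppow (↑(l.take i)) (n+1)) := by
    have c1 := congrArg (Multiset.count y) heq
    rwa [Multiset.count_filter, Multiset.count_filter, if_pos hyx, if_pos hyx] at c1
  have hpy : 0 < Multiset.count y (ppow (↑l) (n+1) - ppow (↑(l.take i)) (n+1)) :=
    Multiset.count_pos.mpr hy
  rw [Multiset.count_sub] at hpy
  omega
end

section
/- Let P(X) = Σ_{i=0}^k A_i X^i be a polynomial over the permutations such that at least one non-constant coefficient A_i with i ≥ 1 contains the element 1 (a fixed point). Then P is injective on the semiring of permutations: for all permutations X and Y, P(X) = P(Y) implies X = Y. -/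
/-- Evaluation of the polynomial `Σ_{i=0}^m A_i X^i` over the permutation semiring. -/
def peval (A : ℕ → Multiset ℕ) (m : ℕ) (X : Multiset ℕ) : Multiset ℕ :=
  (Finset.range (m + 1)).sum fun i => pmul (A i) (ppow X i)

/-- number of points of period dividing `d`, as a term contribution -/
def gfun (d : ℕ) : ℕ → ℕ := fun a => if a ∣ d then a else 0

/-- number of points of period dividing `d` in the permutation `A` -/
def NN (d : ℕ) (A : Multiset ℕ) : ℕ := (A.map (gfun d)).sum

lemma NN_zero (d : ℕ) : NN d 0 = 0 := rfl

lemma NN_add (d : ℕ) (A B : Multiset ℕ) : NN d (A + B) = NN d A + NN d B := by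
  simp [NN]

lemma NN_cons (d a : ℕ) (A : Multiset ℕ) : NN d (a ::ₘ A) = gfun d a + NN d A := by
  simp [NN]

lemma mem_le_NN {d a : ℕ} {A : Multiset ℕ} (ha : a ∈ A) (hdvd : a ∣ d) : a ≤ NN d A := by
  have h1 : gfun d a ∈ A.map (gfun d) := Multiset.mem_map_of_mem _ ha
  have h2 := Multiset.single_le_sum (fun x _ => Nat.zero_le x) _ h1
  simpa [NN, gfun, hdvd] using h2

lemma NN_one (d : ℕ) : NN d ({1} : Multiset ℕ) = 1 := by
  simp [NN, gfun]

lemma gfun_key (d a b : ℕ) :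
    Nat.gcd a b * gfun d (Nat.lcm a b) = gfun d a * gfun d b := by
  unfold gfun
  by_cases ha : a ∣ d <;> by_cases hb : b ∣ d
  · rw [if_pos (Nat.lcm_dvd ha hb), if_pos ha, if_pos hb, Nat.gcd_mul_lcm]
  · rw [if_neg (fun h => hb ((Nat.dvd_lcm_right a b).trans h)), if_neg hb, mul_zero, mul_zero]
  · rw [if_neg (fun h => ha ((Nat.dvd_lcm_left a b).trans h)), if_neg ha, mul_zero, zero_mul]
  · rw [if_neg (fun h => ha ((Nat.dvd_lcm_left a b).trans h)), if_neg ha, mul_zero, zero_mul]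

lemma NN_repl (d n x : ℕ) : NN d (Multiset.replicate n x) = n * gfun d x := by
  simp [NN, Multiset.map_replicate, Multiset.sum_replicate]

lemma NN_inner (d a : ℕ) (B : Multiset ℕ) :
    NN d (B.bind fun b => Multiset.replicate (Nat.gcd a b) (Nat.lcm a b))
      = gfun d a * NN d B := by
  induction B using Multiset.induction with
  | empty => simp [NN]
  | cons b B ih =>
    rw [Multiset.cons_bind, NN_add, ih, NN_repl, NN_cons, Nat.mul_add, gfun_key d a b]

lemma NN_pmul (d : ℕ) (A B : Multiset ℕ) : NN d (pmul A B) = NN d A * NN d B := by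
  induction A using Multiset.induction with
  | empty => simp [pmul, NN]
  | cons a A ih =>
    simp only [pmul] at ih ⊢
    rw [Multiset.cons_bind, NN_add, ih, NN_inner, NN_cons, Nat.add_mul]

lemma NN_ppow (d : ℕ) (X : Multiset ℕ) (n : ℕ) : NN d (ppow X n) = (NN d X) ^ n := by
  induction n with
  | zero => simpa [ppow] using NN_one d
  | succ n ih => rw [ppow, NN_pmul, ih, pow_succ, mul_comm]

/-- `NN d` bundled as an additive monoid hom. -/
def NNhom (d : ℕ) : Multiset ℕ →+ ℕ where
  toFun := NN d
  map_zero' := rfl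
  map_add' := NN_add d

lemma NN_peval (d : ℕ) (A : ℕ → Multiset ℕ) (m : ℕ) (X : Multiset ℕ) :
    NN d (peval A m X) = ∑ i ∈ Finset.range (m + 1), NN d (A i) * (NN d X) ^ i := by
  show NNhom d (peval A m X) = _
  unfold peval
  rw [map_sum]
  refine Finset.sum_congr rfl fun i _ => ?_
  show NN d (pmul (A i) (ppow X i)) = _
  rw [NN_pmul, NN_ppow]

lemma NN_eq_count (m : ℕ) (X : Multiset ℕ) (h : ∀ a ∈ X, a ∣ m → a = m) :
    NN m X = m * X.count m := by
  induction X using Multiset.induction with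
  | empty => simp [NN]
  | cons a X ih =>
    rw [NN_cons, ih (fun b hb => h b (Multiset.mem_cons_of_mem hb)), Multiset.count_cons]
    by_cases had : a ∣ m
    · have ha := h a (Multiset.mem_cons_self a X) had
      subst ha
      simp [gfun, had]
      ring
    · have hne : a ≠ m := fun he => had (he ▸ dvd_refl m)
      simp [gfun, had, Ne.symm hne]

/-- Reconstruction: permutations with the same period-counting function are equal. -/
lemma recon : ∀ n : ℕ, ∀ X Y : Multiset ℕ, Multiset.card X ≤ n → IsPerm X → IsPerm Y →
    (∀ d, NN d X = NN d Y) → X = Y := by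
  intro n
  induction n with
  | zero =>
    intro X Y hcard hX hY h
    have hX0 : X = 0 := Multiset.card_eq_zero.mp (Nat.le_zero.mp hcard)
    subst hX0
    by_contra hY0
    obtain ⟨y, hy⟩ := Multiset.exists_mem_of_ne_zero (fun he => hY0 he.symm)
    have h1 : y ≤ NN y Y := mem_le_NN hy dvd_rfl
    have h2 : NN y (0 : Multiset ℕ) = 0 := rfl
    have h3 := h y
    have := hY y hy
    omega
  | succ n ih =>
    intro X Y hcard hX hY h
    by_cases hX0 : X = 0
    · subst hX0
      by_contra hY0
      obtain ⟨y, hy⟩ := Multiset.exists_mem_of_ne_zero (fun he => hY0 he.symm)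
      have h1 : y ≤ NN y Y := mem_le_NN hy dvd_rfl
      have h2 : NN y (0 : Multiset ℕ) = 0 := rfl
      have h3 := h y
      have := hY y hy
      omega
    · obtain ⟨x, hx⟩ := Multiset.exists_mem_of_ne_zero hX0
      have hxpos := hX x hx
      have hex : ∃ d, 0 < d ∧ 0 < NN d X :=
        ⟨x, hxpos, lt_of_lt_of_le hxpos (mem_le_NN hx dvd_rfl)⟩
      set m := Nat.find hex with hmdef
      have hm := Nat.find_spec hex
      have hmin : ∀ d < m, ¬(0 < d ∧ 0 < NN d X) := fun d hd => Nat.find_min hex hd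
      have hXm : ∀ a ∈ X, a ∣ m → a = m := by
        intro a haX had
        have hapos := hX a haX
        have hle : a ≤ m := Nat.le_of_dvd hm.1 had
        rcases lt_or_eq_of_le hle with hlt | he
        · exact absurd ⟨hapos, lt_of_lt_of_le hapos (mem_le_NN haX dvd_rfl)⟩ (hmin a hlt)
        · exact he
      have hYm : ∀ a ∈ Y, a ∣ m → a = m := by
        intro a haY had
        have hapos := hY a haY
        have hle : a ≤ m := Nat.le_of_dvd hm.1 had
        rcases lt_or_eq_of_le hle with hlt | he
        · have : 0 < NN a X := by
            rw [h a]; exact lt_of_lt_of_le hapos (mem_le_NN haY dvd_rfl)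
          exact absurd ⟨hapos, this⟩ (hmin a hlt)
        · exact he
      have hNX : NN m X = m * X.count m := NN_eq_count m X hXm
      have hNY : NN m Y = m * Y.count m := NN_eq_count m Y hYm
      have hcount : X.count m = Y.count m := by
        have := h m
        rw [hNX, hNY] at this
        exact Nat.eq_of_mul_eq_mul_left hm.1 this
      have hmX : m ∈ X := by
        rw [← Multiset.count_pos]
        have hpos := hm.2
        rw [hNX] at hpos
        exact Nat.pos_of_ne_zero fun h0 => by simp [h0] at hpos
      have hmY : m ∈ Y := by
        rw [← Multiset.count_pos, ← hcount, Multiset.count_pos]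
        exact hmX
      have hN' : ∀ d, NN d (X.erase m) = NN d (Y.erase m) := by
        intro d
        have h2 : NN d (m ::ₘ X.erase m) = NN d (m ::ₘ Y.erase m) := by
          rw [Multiset.cons_erase hmX, Multiset.cons_erase hmY]; exact h d
        rw [NN_cons, NN_cons] at h2
        exact Nat.add_left_cancel h2
      have hcard' : Multiset.card (X.erase m) ≤ n := by
        rw [Multiset.card_erase_of_mem hmX, Nat.pred_eq_sub_one]
        have hc0 : 0 < Multiset.card X := Multiset.card_pos.mpr hX0
        omega
      have hXp : IsPerm (X.erase m) := fun a ha => hX a (Multiset.mem_of_mem_erase ha)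
      have hYp : IsPerm (Y.erase m) := fun a ha => hY a (Multiset.mem_of_mem_erase ha)
      have heq := ih (X.erase m) (Y.erase m) hcard' hXp hYp hN'
      rw [← Multiset.cons_erase hmX, ← Multiset.cons_erase hmY, heq]

/-- a polynomial `P(X) = Σ_{i=0}^k A_i X^i` over the permutations with a
fixed point (the element `1`) in some non-constant coefficient is injective over the
semiring of permutations. -/
theorem peval_injective_of_fixpoint (A : ℕ → Multiset ℕ) (k : ℕ)
    (hA : ∀ i ≤ k, IsPerm (A i)) (hfix : ∃ i, 1 ≤ i ∧ i ≤ k ∧ (1 : ℕ) ∈ A i) :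
    ∀ X Y : Multiset ℕ, IsPerm X → IsPerm Y → peval A k X = peval A k Y → X = Y := by
  intro X Y hX hY hP
  obtain ⟨j, hj1, hjk, hjfix⟩ := hfix
  have hN : ∀ d, NN d X = NN d Y := by
    intro d
    have hc : 1 ≤ NN d (A j) := mem_le_NN hjfix (one_dvd d)
    have key : ∀ s t : ℕ, s < t →
        (∑ i ∈ Finset.range (k + 1), NN d (A i) * s ^ i)
          < (∑ i ∈ Finset.range (k + 1), NN d (A i) * t ^ i) := by
      intro s t hst
      apply Finset.sum_lt_sum
      · intro i _
        exact Nat.mul_le_mul_left _ (Nat.pow_le_pow_left hst.le i)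
      · have hj0 : j ≠ 0 := by omega
        have hc' : 0 < NN d (A j) := hc
        exact ⟨j, Finset.mem_range.mpr (by omega),
          mul_lt_mul_of_pos_left (Nat.pow_lt_pow_left hst hj0) hc'⟩
    have heq : (∑ i ∈ Finset.range (k + 1), NN d (A i) * (NN d X) ^ i)
        = (∑ i ∈ Finset.range (k + 1), NN d (A i) * (NN d Y) ^ i) := by
      rw [← NN_peval, ← NN_peval, hP]
    rcases lt_trichotomy (NN d X) (NN d Y) with hlt | he | hgt
    · exact absurd heq (Nat.ne_of_lt (key _ _ hlt))
    · exact he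
    · exact absurd heq.symm (Nat.ne_of_lt (key _ _ hgt))
  exact recon (Multiset.card X) X Y le_rfl hX hY hN
end

section
/- Let A be a nonempty permutation all of whose elements are at least 2 (i.e., A contains no fixed point). Then for every integer k > 0 there exist two distinct permutations X and Y such that A·X^k = A·Y^k. -/
namespace MonomialAux

/-- The character `χ_m(X) = ∑_{d ∈ X, d ∣ m} d`. -/
def chi (m : ℕ) (X : Multiset ℕ) : ℕ := (X.map fun d => if d ∣ m then d else 0).sum

lemma chi_add (m : ℕ) (X Y : Multiset ℕ) : chi m (X + Y) = chi m X + chi m Y := by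
  simp [chi]

lemma chi_cons (m a : ℕ) (X : Multiset ℕ) :
    chi m (a ::ₘ X) = (if a ∣ m then a else 0) + chi m X := by
  simp [chi]

lemma chi_replicate (m r v : ℕ) :
    chi m (Multiset.replicate r v) = r * (if v ∣ m then v else 0) := by
  simp [chi, Multiset.map_replicate, Multiset.sum_replicate]

lemma chi_finsetSum {ι : Type*} (m : ℕ) (s : Finset ι) (f : ι → Multiset ℕ) :
    chi m (∑ i ∈ s, f i) = ∑ i ∈ s, chi m (f i) := by
  classical
  induction s using Finset.induction_on with
  | empty => simp [chi]
  | insert _ _ h ih => rw [Finset.sum_insert h, chi_add, ih, Finset.sum_insert h]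

lemma gcd_lcm_ite (m a b : ℕ) :
    Nat.gcd a b * (if Nat.lcm a b ∣ m then Nat.lcm a b else 0)
      = (if a ∣ m then a else 0) * (if b ∣ m then b else 0) := by
  by_cases ha : a ∣ m
  · by_cases hb : b ∣ m
    · rw [if_pos ha, if_pos hb, if_pos (Nat.lcm_dvd ha hb), Nat.gcd_mul_lcm]
    · rw [if_neg hb, mul_zero, if_neg (fun h => hb ((Nat.dvd_lcm_right a b).trans h)), mul_zero]
  · rw [if_neg ha, zero_mul, if_neg (fun h => ha ((Nat.dvd_lcm_left a b).trans h)), mul_zero]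

lemma chi_bind_single (m a : ℕ) (B : Multiset ℕ) :
    chi m (B.bind fun b => Multiset.replicate (Nat.gcd a b) (Nat.lcm a b))
      = (if a ∣ m then a else 0) * chi m B := by
  induction B using Multiset.induction with
  | empty => simp [chi]
  | cons b B ih =>
      rw [Multiset.cons_bind, chi_add, ih, chi_cons, mul_add, chi_replicate, gcd_lcm_ite]

lemma chi_pmul (m : ℕ) (A B : Multiset ℕ) : chi m (pmul A B) = chi m A * chi m B := by
  induction A using Multiset.induction with
  | empty => simp [pmul, chi]
  | cons a A ih =>
      have hbind : pmul (a ::ₘ A) B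
          = (B.bind fun b => Multiset.replicate (Nat.gcd a b) (Nat.lcm a b)) + pmul A B := by
        simp [pmul, Multiset.cons_bind]
      rw [hbind, chi_add, ih, chi_cons, add_mul, chi_bind_single]

lemma chi_ppow (m k : ℕ) (X : Multiset ℕ) : chi m (ppow X k) = chi m X ^ k := by
  induction k with
  | zero => simp [ppow, chi]
  | succ k ih =>
      show chi m (pmul X (ppow X k)) = _
      rw [chi_pmul, ih]
      ring

lemma chi_eq_sum_divisors {m : ℕ} (hm : m ≠ 0) (X : Multiset ℕ) :
    chi m X = ∑ e ∈ m.divisors, e * X.count e := by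
  induction X using Multiset.induction with
  | empty => simp [chi]
  | cons a X ih =>
      rw [chi_cons, ih]
      have key : ∀ e ∈ m.divisors, e * (a ::ₘ X).count e
          = e * X.count e + (if e = a then e else 0) := by
        intro e _
        rw [Multiset.count_cons]
        by_cases h : e = a <;> simp [h, Nat.mul_add]
      rw [Finset.sum_congr rfl key, Finset.sum_add_distrib,
        Finset.sum_ite_eq' m.divisors a (fun e => e)]
      by_cases ha : a ∣ m
      · rw [if_pos (Nat.mem_divisors.mpr ⟨ha, hm⟩), if_pos ha, Nat.add_comm]
      · rw [if_neg (fun h => ha (Nat.mem_divisors.mp h).1), if_neg ha, Nat.zero_add, Nat.add_zero]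

lemma chi_injective {X Y : Multiset ℕ} (hX : IsPerm X) (hY : IsPerm Y)
    (h : ∀ m, m ≠ 0 → chi m X = chi m Y) : X = Y := by
  have key : ∀ d, d ≠ 0 → X.count d = Y.count d := by
    intro d
    induction d using Nat.strong_induction_on with
    | _ d ih =>
      intro hd
      have h1 := h d hd
      rw [chi_eq_sum_divisors hd X, chi_eq_sum_divisors hd Y,
        ← Nat.insert_self_properDivisors hd,
        Finset.sum_insert Nat.self_notMem_properDivisors,
        Finset.sum_insert Nat.self_notMem_properDivisors] at h1
      have h2 : ∑ e ∈ d.properDivisors, e * X.count e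
          = ∑ e ∈ d.properDivisors, e * Y.count e :=
        Finset.sum_congr rfl fun e he => by
          rw [ih e (Nat.mem_properDivisors.mp he).2 (Nat.pos_of_mem_properDivisors he).ne']
      rw [h2] at h1
      exact Nat.eq_of_mul_eq_mul_left (Nat.pos_of_ne_zero hd) (Nat.add_right_cancel h1)
  refine Multiset.ext.mpr fun d => ?_
  rcases eq_or_ne d 0 with rfl | hd
  · rw [Multiset.count_eq_zero_of_notMem fun h0 => lt_irrefl 0 (hX 0 h0),
      Multiset.count_eq_zero_of_notMem fun h0 => lt_irrefl 0 (hY 0 h0)]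
  · exact key d hd

lemma isPerm_pmul {A B : Multiset ℕ} (hA : IsPerm A) (hB : IsPerm B) : IsPerm (pmul A B) := by
  intro x hx
  obtain ⟨a, ha, hx⟩ := Multiset.mem_bind.mp hx
  obtain ⟨b, hb, hx⟩ := Multiset.mem_bind.mp hx
  rw [Multiset.eq_of_mem_replicate hx]
  exact Nat.pos_of_ne_zero (Nat.lcm_ne_zero (hA a ha).ne' (hB b hb).ne')

lemma isPerm_ppow {X : Multiset ℕ} (hX : IsPerm X) (k : ℕ) : IsPerm (ppow X k) := by
  induction k with
  | zero =>
      intro x hx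
      rw [Multiset.mem_singleton.mp hx]
      exact Nat.one_pos
  | succ k ih => exact isPerm_pmul hX ih

lemma exists_dvd_of_chi_ne (m : ℕ) (A : Multiset ℕ) (h : chi m A ≠ 0) : ∃ a ∈ A, a ∣ m := by
  by_contra hc
  push_neg at hc
  apply h
  apply Multiset.sum_eq_zero
  intro x hx
  obtain ⟨a, ha, rfl⟩ := Multiset.mem_map.mp hx
  rw [if_neg (hc a ha)]

/-- The "even part" or "odd part" multiset built from subsets of `P`. -/
def psum (P : Finset ℕ) (c : ℕ) (pr : Finset ℕ → Prop) [DecidablePred pr] : Multiset ℕ :=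
  ∑ S ∈ P.powerset.filter pr, Multiset.replicate (c / ∏ p ∈ S, p) (∏ p ∈ S, p)

lemma prod_dvd_iff {P : Finset ℕ} (hP : ∀ p ∈ P, p.Prime) {S : Finset ℕ} (hS : S ⊆ P) (m : ℕ) :
    (∏ p ∈ S, p) ∣ m ↔ S ⊆ P.filter (· ∣ m) := by
  constructor
  · intro h q hq
    exact Finset.mem_filter.mpr ⟨hS hq, (Finset.dvd_prod_of_mem _ hq).trans h⟩
  · intro h
    exact Finset.prod_primes_dvd m (fun q hq => (hP q (hS hq)).prime)
      (fun q hq => (Finset.mem_filter.mp (h hq)).2)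

lemma chi_psum (P : Finset ℕ) (hP : ∀ p ∈ P, p.Prime) (m : ℕ)
    (pr : Finset ℕ → Prop) [DecidablePred pr] :
    chi m (psum P (∏ p ∈ P, p) pr)
      = ∑ S ∈ P.powerset.filter pr, (if S ⊆ P.filter (· ∣ m) then (∏ p ∈ P, p) else 0) := by
  rw [psum, chi_finsetSum]
  refine Finset.sum_congr rfl fun S hS => ?_
  have hSP : S ⊆ P := Finset.mem_powerset.mp (Finset.mem_filter.mp hS).1
  rw [chi_replicate]
  by_cases h : (∏ p ∈ S, p) ∣ m
  · rw [if_pos h, Nat.div_mul_cancel (Finset.prod_dvd_prod_of_subset S P _ hSP),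
      if_pos ((prod_dvd_iff hP hSP m).mp h)]
  · rw [if_neg h, mul_zero, if_neg (fun hsub => h ((prod_dvd_iff hP hSP m).mpr hsub))]

/-- Flip membership of `p`. -/
def flip (p : ℕ) (S : Finset ℕ) : Finset ℕ := if p ∈ S then S.erase p else insert p S

lemma parity_sum_eq {P Q : Finset ℕ} (hQP : Q ⊆ P) {p : ℕ} (hpP : p ∈ P) (hp : p ∈ Q) (c : ℕ) :
    ∑ S ∈ P.powerset.filter (fun S => Even S.card), (if S ⊆ Q then c else 0)
      = ∑ S ∈ P.powerset.filter (fun S => ¬ Even S.card), (if S ⊆ Q then c else 0) := by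
  classical
  have hflip_mem : ∀ S, S ∈ P.powerset → flip p S ∈ P.powerset := by
    intro S hS
    rw [Finset.mem_powerset] at hS ⊢
    unfold flip
    split
    · exact (Finset.erase_subset p S).trans hS
    · exact Finset.insert_subset hpP hS
  have hflip_card : ∀ S : Finset ℕ, Even (flip p S).card ↔ ¬ Even S.card := by
    intro S
    unfold flip
    split
    case isTrue h =>
      rw [Finset.card_erase_of_mem h]
      have hcard : S.card - 1 + 1 = S.card := Nat.succ_pred_eq_of_pos (Finset.card_pos.mpr ⟨p, h⟩)
      constructor
      · intro he hco
        rw [← hcard] at hco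
        exact (Nat.even_add_one.mp hco) he
      · intro hno
        by_contra hne
        exact hno (hcard ▸ Nat.even_add_one.mpr hne)
    case isFalse h =>
      rw [Finset.card_insert_of_notMem h, Nat.even_add_one]
  have hflip_flip : ∀ S : Finset ℕ, flip p (flip p S) = S := by
    intro S
    unfold flip
    by_cases h : p ∈ S
    · rw [if_pos h, if_neg (Finset.notMem_erase p S), Finset.insert_erase h]
    · rw [if_neg h, if_pos (Finset.mem_insert_self p S), Finset.erase_insert h]
  have hflip_sub : ∀ S : Finset ℕ, (flip p S ⊆ Q ↔ S ⊆ Q) := by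
    intro S
    unfold flip
    split
    case isTrue h =>
      constructor
      · intro hsub q hq
        rcases eq_or_ne q p with rfl | hqp
        · exact hp
        · exact hsub (Finset.mem_erase.mpr ⟨hqp, hq⟩)
      · intro hsub
        exact (Finset.erase_subset p S).trans hsub
    case isFalse h =>
      constructor
      · intro hsub
        exact (Finset.subset_insert p S).trans hsub
      · intro hsub
        exact Finset.insert_subset hp hsub
  refine Finset.sum_nbij' (flip p) (flip p) ?_ ?_ ?_ ?_ ?_
  · intro S hS
    rw [Finset.mem_filter] at hS ⊢
    exact ⟨hflip_mem S hS.1, fun he => (hflip_card S).mp he hS.2⟩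
  · intro S hS
    rw [Finset.mem_filter] at hS ⊢
    exact ⟨hflip_mem S hS.1, (hflip_card S).mpr hS.2⟩
  · intro S _; exact hflip_flip S
  · intro S _; exact hflip_flip S
  · intro S _
    by_cases h : S ⊆ Q
    · rw [if_pos h, if_pos ((hflip_sub S).mpr h)]
    · rw [if_neg h, if_neg (fun hs => h ((hflip_sub S).mp hs))]

end MonomialAux

open MonomialAux in
/-- if `A` is a nonempty permutation without fixed points (all elements at
least `2`), then for every `k > 0` there are distinct permutations `X ≠ Y` with
`A·X^k = A·Y^k`. -/
theorem monomial_not_injective (A : Multiset ℕ) (hA : A ≠ 0) (h2 : ∀ x ∈ A, 2 ≤ x) :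
    ∀ k : ℕ, 0 < k → ∃ X Y : Multiset ℕ, IsPerm X ∧ IsPerm Y ∧ X ≠ Y ∧
      pmul A (ppow X k) = pmul A (ppow Y k) := by
  classical
  intro k _
  set n := A.prod with hn
  have hn0 : n ≠ 0 := by
    intro h
    have h0 : (0 : ℕ) ∈ A := Multiset.prod_eq_zero_iff.mp h
    exact absurd (h2 0 h0) (by norm_num)
  set P := n.primeFactors with hPdef
  have hP : ∀ p ∈ P, p.Prime := fun p hp => Nat.prime_of_mem_primeFactors hp
  set c := ∏ p ∈ P, p with hc
  set X := psum P c (fun S => Even S.card) with hX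
  set Y := psum P c (fun S => ¬ Even S.card) with hY
  have hcpos : 0 < c := Finset.prod_pos fun p hp => (hP p hp).pos
  -- membership of A's elements gives primes of P dividing m
  have hkey : ∀ m : ℕ, (∃ a ∈ A, a ∣ m) → ∃ p ∈ P, p ∣ m := by
    intro m ⟨a, haA, ham⟩
    have ha1 : a ≠ 1 := by
      intro h1; rw [h1] at haA; exact absurd (h2 1 haA) (by norm_num)
    obtain ⟨p, hpp, hpa⟩ := Nat.exists_prime_and_dvd ha1
    have han : a ∣ n := Multiset.dvd_prod haA
    exact ⟨p, Nat.mem_primeFactors.mpr ⟨hpp, hpa.trans han, hn0⟩, hpa.trans ham⟩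
  -- X and Y are permutations
  have hXmem : ∀ x, x ∈ X → ∃ S : Finset ℕ, S ⊆ P ∧ x = ∏ p ∈ S, p := by
    intro x hx
    obtain ⟨S, hS, hxS⟩ := Multiset.mem_sum.mp hx
    exact ⟨S, Finset.mem_powerset.mp (Finset.mem_filter.mp hS).1,
      Multiset.eq_of_mem_replicate hxS⟩
  have hYmem : ∀ x, x ∈ Y → ∃ S : Finset ℕ, S ⊆ P ∧ S.Nonempty ∧ x = ∏ p ∈ S, p := by
    intro x hx
    obtain ⟨S, hS, hxS⟩ := Multiset.mem_sum.mp hx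
    refine ⟨S, Finset.mem_powerset.mp (Finset.mem_filter.mp hS).1, ?_,
      Multiset.eq_of_mem_replicate hxS⟩
    rw [Finset.nonempty_iff_ne_empty]
    intro hemp
    exact (Finset.mem_filter.mp hS).2 (by simp [hemp])
  have hXperm : IsPerm X := by
    intro x hx
    obtain ⟨S, hSP, rfl⟩ := hXmem x hx
    exact Finset.prod_pos fun p hp => (hP p (hSP hp)).pos
  have hYperm : IsPerm Y := by
    intro x hx
    obtain ⟨S, hSP, _, rfl⟩ := hYmem x hx
    exact Finset.prod_pos fun p hp => (hP p (hSP hp)).pos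
  -- X ≠ Y
  have h1X : (1 : ℕ) ∈ X := by
    rw [hX, psum]
    refine Multiset.mem_sum.mpr ⟨∅, ?_, ?_⟩
    · simp
    · simp [Multiset.mem_replicate, hcpos.ne']
  have h1Y : (1 : ℕ) ∉ Y := by
    intro h
    obtain ⟨S, hSP, ⟨q, hq⟩, hprod⟩ := hYmem 1 h
    have hq1 : q ∣ 1 := by rw [hprod]; exact Finset.dvd_prod_of_mem _ hq
    exact (hP q (hSP hq)).one_lt.ne' (Nat.dvd_one.mp hq1)
  have hXY : X ≠ Y := fun h => h1Y (h ▸ h1X)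
  -- character equality
  have hchi : ∀ m : ℕ, m ≠ 0 → chi m (pmul A (ppow X k)) = chi m (pmul A (ppow Y k)) := by
    intro m _
    rw [chi_pmul, chi_pmul, chi_ppow, chi_ppow]
    rcases eq_or_ne (chi m A) 0 with h0 | h0
    · rw [h0, zero_mul, zero_mul]
    · obtain ⟨p, hpP, hpm⟩ := hkey m (exists_dvd_of_chi_ne m A h0)
      have hQ : p ∈ P.filter (· ∣ m) := Finset.mem_filter.mpr ⟨hpP, hpm⟩
      have : chi m X = chi m Y := by
        rw [hX, hY, chi_psum P hP m, chi_psum P hP m]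
        exact parity_sum_eq (Finset.filter_subset _ _) hpP hQ c
      rw [this]
  exact ⟨X, Y, hXperm, hYperm, hXY,
    chi_injective (isPerm_pmul (fun a ha => lt_of_lt_of_le Nat.zero_lt_two (h2 a ha)) (isPerm_ppow hXperm k))
      (isPerm_pmul (fun a ha => lt_of_lt_of_le Nat.zero_lt_two (h2 a ha)) (isPerm_ppow hYperm k)) hchi⟩
end

section
/- Let P(X) = Σ_{i=0}^m A_i X^i be a polynomial over the permutations such that every element of every non-constant coefficient A_i with i ≥ 1 is at least 2 (i.e., no non-constant coefficient contains a fixed point). Then P is not injective on the semiring of permutations: there exist two distinct permutations X and Y such that P(X) = P(Y). -/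
/-- number of points fixed by the d-th power: sum over cycles dividing d. -/
def fixc (A : Multiset ℕ) (d : ℕ) : ℕ := (A.map (fun a => if a ∣ d then a else 0)).sum

lemma fixc_zero (d : ℕ) : fixc 0 d = 0 := rfl

lemma fixc_add (A B : Multiset ℕ) (d : ℕ) : fixc (A + B) d = fixc A d + fixc B d := by
  simp [fixc]

lemma fixc_cons (a : ℕ) (A : Multiset ℕ) (d : ℕ) :
    fixc (a ::ₘ A) d = (if a ∣ d then a else 0) + fixc A d := by
  simp [fixc]

lemma fixc_singleton (a d : ℕ) : fixc {a} d = if a ∣ d then a else 0 := by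
  simp [fixc]

lemma fixc_one (d : ℕ) : fixc {1} d = 1 := by
  simp [fixc]

lemma fixc_nsmul (n : ℕ) (A : Multiset ℕ) (d : ℕ) : fixc (n • A) d = n * fixc A d := by
  unfold fixc
  rw [Multiset.map_nsmul, Multiset.sum_nsmul]
  ring

lemma fixc_replicate (n v d : ℕ) :
    fixc (Multiset.replicate n v) d = n * (if v ∣ d then v else 0) := by
  unfold fixc
  rw [Multiset.map_replicate, Multiset.sum_replicate, smul_eq_mul]

lemma fixc_bind (A : Multiset ℕ) (f : ℕ → Multiset ℕ) (d : ℕ) :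
    fixc (A.bind f) d = (A.map (fun a => fixc (f a) d)).sum := by
  induction A using Multiset.induction_on with
  | empty => rfl
  | cons a A ih => rw [Multiset.cons_bind, fixc_add, Multiset.map_cons, Multiset.sum_cons, ih]

lemma fixc_pmul (A B : Multiset ℕ) (d : ℕ) : fixc (pmul A B) d = fixc A d * fixc B d := by
  unfold pmul
  rw [fixc_bind]
  have key : ∀ a : ℕ, fixc (B.bind fun b => Multiset.replicate (Nat.gcd a b) (Nat.lcm a b)) d
      = (if a ∣ d then a else 0) * fixc B d := by
    intro a
    rw [fixc_bind]
    have : ∀ b : ℕ, (fun b => fixc (Multiset.replicate (Nat.gcd a b) (Nat.lcm a b)) d) b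
        = (fun b => (if a ∣ d then a else 0) * (if b ∣ d then b else 0)) b := by
      intro b
      simp only [fixc_replicate]
      by_cases ha : a ∣ d
      · by_cases hb : b ∣ d
        · rw [if_pos (Nat.lcm_dvd_iff.mpr ⟨ha, hb⟩), if_pos ha, if_pos hb, Nat.gcd_mul_lcm]
        · rw [if_neg (fun h => hb (Nat.lcm_dvd_iff.mp h).2), if_pos ha, if_neg hb]
          ring
      · rw [if_neg (fun h => ha (Nat.lcm_dvd_iff.mp h).1), if_neg ha]
        ring
    rw [funext this]
    unfold fixc
    rw [← Multiset.sum_map_mul_left]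
  rw [funext key]
  unfold fixc
  rw [← Multiset.sum_map_mul_right]

lemma fixc_ppow (X : Multiset ℕ) (n d : ℕ) : fixc (ppow X n) d = (fixc X d) ^ n := by
  induction n with
  | zero => simpa [ppow] using fixc_one d
  | succ n ih => rw [ppow, fixc_pmul, ih, pow_succ]; ring

lemma fixc_finsum (s : Finset ℕ) (f : ℕ → Multiset ℕ) (d : ℕ) :
    fixc (∑ i ∈ s, f i) d = ∑ i ∈ s, fixc (f i) d := by
  classical
  induction s using Finset.induction_on with
  | empty => rfl
  | insert _ _ h ih => rw [Finset.sum_insert h, Finset.sum_insert h, fixc_add, ih]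

lemma fixc_peval (A : ℕ → Multiset ℕ) (m : ℕ) (X : Multiset ℕ) (d : ℕ) :
    fixc (peval A m X) d = ∑ i ∈ Finset.range (m + 1), fixc (A i) d * (fixc X d) ^ i := by
  unfold peval
  rw [fixc_finsum]
  exact Finset.sum_congr rfl fun i _ => by rw [fixc_pmul, fixc_ppow]

/-- fixc as a divisor sum of counts -/
lemma fixc_eq_sum_divisors (A : Multiset ℕ) (d : ℕ) (hd : d ≠ 0) :
    fixc A d = ∑ a ∈ d.divisors, a * A.count a := by
  induction A using Multiset.induction_on with
  | empty => simp [fixc_zero]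
  | cons a A ih =>
    rw [fixc_cons, ih]
    have : ∀ k ∈ d.divisors, k * (a ::ₘ A).count k
        = k * A.count k + (if k = a then k else 0) := by
      intro k _
      rw [Multiset.count_cons]
      by_cases h : k = a <;> simp [h] <;> ring
    rw [Finset.sum_congr rfl this, Finset.sum_add_distrib, Finset.sum_ite_eq' d.divisors a (fun k => k)]
    by_cases ha : a ∣ d
    · rw [if_pos ha, if_pos (Nat.mem_divisors.mpr ⟨ha, hd⟩)]; ring
    · rw [if_neg ha, if_neg (fun h => ha (Nat.mem_divisors.mp h).1)]; ring

/-- Permutations with equal fix-counts are equal. -/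
lemma perm_eq_of_fixc (A B : Multiset ℕ) (hA : IsPerm A) (hB : IsPerm B)
    (h : ∀ d, d ≠ 0 → fixc A d = fixc B d) : A = B := by
  have key : ∀ n, A.count n = B.count n := by
    intro n
    induction n using Nat.strong_induction_on with
    | _ n ih =>
      rcases Nat.eq_zero_or_pos n with rfl | hn
      · rw [Multiset.count_eq_zero.mpr (fun hc => lt_irrefl 0 (hA 0 hc)),
          Multiset.count_eq_zero.mpr (fun hc => lt_irrefl 0 (hB 0 hc))]
      · have hne : n ≠ 0 := Nat.pos_iff_ne_zero.mp hn
        have hfa := h n hne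
        rw [fixc_eq_sum_divisors A n hne, fixc_eq_sum_divisors B n hne] at hfa
        rw [← Nat.insert_self_properDivisors hne, Finset.sum_insert Nat.self_notMem_properDivisors,
          Finset.sum_insert Nat.self_notMem_properDivisors] at hfa
        have hps : ∑ a ∈ n.properDivisors, a * A.count a = ∑ a ∈ n.properDivisors, a * B.count a :=
          Finset.sum_congr rfl fun a haa => by
            rw [ih a (Nat.mem_properDivisors.mp haa).2]
        rw [hps] at hfa
        have := Nat.add_right_cancel hfa
        exact Nat.eq_of_mul_eq_mul_left hn this
  exact Multiset.ext.mpr key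

/-- The pair of witnesses, built by recursion over a list of forbidden cycle lengths. -/
def XY : List ℕ → Multiset ℕ × Multiset ℕ
  | [] => ({1}, 0)
  | e :: l => (e • (XY l).1 + pmul {e} (XY l).2, e • (XY l).2 + pmul {e} (XY l).1)

lemma isPerm_add {A B : Multiset ℕ} (hA : IsPerm A) (hB : IsPerm B) : IsPerm (A + B) := by
  intro x hx
  rcases Multiset.mem_add.mp hx with h | h
  · exact hA x h
  · exact hB x h

lemma isPerm_pmul {A B : Multiset ℕ} (hA : IsPerm A) (hB : IsPerm B) : IsPerm (pmul A B) := by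
  intro x hx
  unfold pmul at hx
  rcases Multiset.mem_bind.mp hx with ⟨a, ha, hx⟩
  rcases Multiset.mem_bind.mp hx with ⟨b, hb, hx⟩
  rw [Multiset.eq_of_mem_replicate hx]
  exact Nat.pos_of_ne_zero (Nat.lcm_ne_zero (hA a ha).ne' (hB b hb).ne')

lemma isPerm_nsmul {A : Multiset ℕ} (n : ℕ) (hA : IsPerm A) : IsPerm (n • A) := by
  intro x hx
  exact hA x (Multiset.mem_nsmul.mp hx).2

lemma isPerm_XY (l : List ℕ) (hl : ∀ e ∈ l, 0 < e) : IsPerm (XY l).1 ∧ IsPerm (XY l).2 := by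
  induction l with
  | nil =>
    constructor
    · intro x hx; rw [Multiset.mem_singleton.mp hx]; exact one_pos
    · intro x hx; exact absurd hx (Multiset.notMem_zero x)
  | cons e l ih =>
    have he : 0 < e := hl e (List.mem_cons_self)
    have hl' : ∀ e ∈ l, 0 < e := fun x hx => hl x (List.mem_cons_of_mem e hx)
    have hsing : IsPerm ({e} : Multiset ℕ) := fun x hx => Multiset.mem_singleton.mp hx ▸ he
    obtain ⟨h1, h2⟩ := ih hl'
    exact ⟨isPerm_add (isPerm_nsmul e h1) (isPerm_pmul hsing h2),
      isPerm_add (isPerm_nsmul e h2) (isPerm_pmul hsing h1)⟩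

lemma fixc_XY (l : List ℕ) (d : ℕ) :
    fixc (XY l).1 d = fixc (XY l).2 d + (l.map fun e => if e ∣ d then 0 else e).prod := by
  induction l with
  | nil => simp [XY, fixc_one, fixc_zero]
  | cons e l ih =>
    show fixc (e • (XY l).1 + pmul {e} (XY l).2) d
        = fixc (e • (XY l).2 + pmul {e} (XY l).1) d + _
    rw [fixc_add, fixc_add, fixc_nsmul, fixc_nsmul, fixc_pmul, fixc_pmul, fixc_singleton,
      List.map_cons, List.prod_cons, ih]
    by_cases he : e ∣ d <;> simp [he] <;> ring

lemma isPerm_ppow {X : Multiset ℕ} (hX : IsPerm X) (n : ℕ) : IsPerm (ppow X n) := by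
  induction n with
  | zero => intro x hx; rw [Multiset.mem_singleton.mp hx]; exact one_pos
  | succ n ih => exact isPerm_pmul hX ih

lemma isPerm_peval (A : ℕ → Multiset ℕ) (m : ℕ) (hA : ∀ i ≤ m, IsPerm (A i))
    {X : Multiset ℕ} (hX : IsPerm X) : IsPerm (peval A m X) := by
  intro x hx
  unfold peval at hx
  rcases Multiset.mem_sum.mp hx with ⟨i, hi, hx⟩
  exact isPerm_pmul (hA i (Nat.lt_succ_iff.mp (Finset.mem_range.mp hi))) (isPerm_ppow hX i) x hx

/-- a polynomial `P(X) = Σ_{i=0}^m A_i X^i` over the permutations whose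
non-constant coefficients contain no fixed point (all their elements are at least `2`)
is not injective over the semiring of permutations. -/
theorem peval_not_injective_of_no_fixpoint (A : ℕ → Multiset ℕ) (m : ℕ)
    (hA : ∀ i ≤ m, IsPerm (A i)) (h2 : ∀ i, 1 ≤ i → i ≤ m → ∀ x ∈ A i, 2 ≤ x) :
    ∃ X Y : Multiset ℕ, IsPerm X ∧ IsPerm Y ∧ X ≠ Y ∧ peval A m X = peval A m Y := by
  classical
  set M : Multiset ℕ := ∑ i ∈ Finset.range m, A (i + 1) with hM
  set l : List ℕ := M.toList with hlist
  have hmemM : ∀ e ∈ M, 2 ≤ e := by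
    intro e he
    rcases Multiset.mem_sum.mp he with ⟨i, hi, he⟩
    exact h2 (i + 1) (Nat.le_add_left 1 i) (Nat.succ_le_of_lt (Finset.mem_range.mp hi)) e he
  have hl2 : ∀ e ∈ l, 2 ≤ e := fun e he => hmemM e ((Multiset.mem_toList).mp he)
  have hlpos : ∀ e ∈ l, 0 < e := fun e he => lt_of_lt_of_le two_pos (hl2 e he)
  obtain ⟨hPX, hPY⟩ := isPerm_XY l hlpos
  refine ⟨(XY l).1, (XY l).2, hPX, hPY, ?_, ?_⟩
  · -- X ≠ Y
    intro hEq
    have h1 := fixc_XY l 1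
    rw [hEq] at h1
    have hprod : 0 < (l.map fun e => if e ∣ 1 then 0 else e).prod := by
      apply List.prod_pos
      intro x hx
      rcases List.mem_map.mp hx with ⟨e, he, rfl⟩
      have h2e := hl2 e he
      have hne : ¬ e ∣ 1 := fun h => by
        have := Nat.le_of_dvd one_pos h
        omega
      rw [if_neg hne]
      exact hlpos e he
    omega
  · -- equal evaluations
    apply perm_eq_of_fixc _ _ (isPerm_peval A m hA hPX) (isPerm_peval A m hA hPY)
    intro d hd
    rw [fixc_peval, fixc_peval]
    apply Finset.sum_congr rfl
    intro i hi
    rcases Nat.eq_zero_or_pos i with rfl | hipos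
    · simp
    by_cases hz : fixc (A i) d = 0
    · rw [hz, zero_mul, zero_mul]
    · -- some element of A i divides d, hence lies in l and kills the product
      have : ∃ a ∈ A i, (if a ∣ d then a else 0) ≠ 0 := by
        by_contra hc
        push_neg at hc
        exact hz (Multiset.sum_eq_zero (fun x hx => by
          rcases Multiset.mem_map.mp hx with ⟨a, ha, rfl⟩
          exact hc a ha))
      rcases this with ⟨a, ha, hane⟩
      have had : a ∣ d := by
        by_contra hnd
        exact hane (if_neg hnd)
      have haM : a ∈ M := by
        rw [hM]
        apply Multiset.mem_sum.mpr
        refine ⟨i - 1, Finset.mem_range.mpr ?_, ?_⟩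
        · have := Finset.mem_range.mp hi; omega
        · have : i - 1 + 1 = i := by omega
          rw [this]; exact ha
      have hal : a ∈ l := (Multiset.mem_toList).mpr haM
      have hprod0 : (l.map fun e => if e ∣ d then 0 else e).prod = 0 := by
        exact List.prod_eq_zero (List.mem_map.mpr ⟨a, hal, if_pos had⟩)
      have := fixc_XY l d
      rw [hprod0, Nat.add_zero] at this
      rw [this]
end

section
/- Let A and X be permutations with A pseudo-cancelable and X nonempty, and let B = A·X (which is nonempty). Then ℓ(A) divides ℓ(B), and there exists a divisor d of ℓ(A) that is coprime with alcm_{ℓ(A)} ℓ(B) such that the integer d · alcm_{ℓ(A)} ℓ(B) is an element of X. -/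
/-- `ell X` is the minimum element of the (nonempty) multiset `X`. -/
noncomputable def ell (X : Multiset ℕ) : ℕ := sInf {x : ℕ | x ∈ X}

/-- A nonempty permutation `A` is pseudo-cancelable if every element of `A` is a
multiple of its minimum `ell A`. -/
def PseudoCancelable (A : Multiset ℕ) : Prop := A ≠ 0 ∧ ∀ x ∈ A, ell A ∣ x

private lemma lcm_gcd_distrib (a b c : ℕ) (ha : a ≠ 0) (hb : b ≠ 0) (hc : c ≠ 0) :
    Nat.lcm a (Nat.gcd b c) = Nat.gcd (Nat.lcm a b) (Nat.lcm a c) := by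
  have hg : Nat.gcd b c ≠ 0 := Nat.gcd_ne_zero_left hb
  have h1 : Nat.lcm a (Nat.gcd b c) ≠ 0 := Nat.lcm_ne_zero ha hg
  have h2 : Nat.lcm a b ≠ 0 := Nat.lcm_ne_zero ha hb
  have h3 : Nat.lcm a c ≠ 0 := Nat.lcm_ne_zero ha hc
  have h4 : Nat.gcd (Nat.lcm a b) (Nat.lcm a c) ≠ 0 := Nat.gcd_ne_zero_left h2
  apply Nat.factorization_inj h1 h4
  rw [Nat.factorization_lcm ha hg, Nat.factorization_gcd hb hc,
    Nat.factorization_gcd h2 h3, Nat.factorization_lcm ha hb, Nat.factorization_lcm ha hc]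
  ext p
  simp only [Finsupp.sup_apply, Finsupp.inf_apply]
  exact max_min_distrib_left ..

/-- if `A` is pseudo-cancelable, `X` a nonempty permutation and `B = A·X`,
then `ℓ(A) ∣ ℓ(B)` and some divisor `d` of `ℓ(A)` coprime with `alcm_{ℓ(A)} ℓ(B)` is such
that `d · alcm_{ℓ(A)} ℓ(B)` is an element of `X`. -/
theorem detach_cycle (A X : Multiset ℕ) (hA : IsPerm A) (hX : IsPerm X)
    (hpc : PseudoCancelable A) (hXne : X ≠ 0) :
    ell A ∣ ell (pmul A X) ∧
    ∃ d : ℕ, d ∣ ell A ∧ Nat.Coprime d (alcm (ell A) (ell (pmul A X))) ∧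
      d * alcm (ell A) (ell (pmul A X)) ∈ X := by
  obtain ⟨hAne, hdvd⟩ := hpc
  set a := ell A with ha_def
  set L := ell (pmul A X) with hL_def
  -- a ∈ A, a > 0
  have hAset : {x : ℕ | x ∈ A}.Nonempty := by
    obtain ⟨y, hy⟩ := Multiset.exists_mem_of_ne_zero hAne
    exact ⟨y, hy⟩
  have haA : a ∈ A := Nat.sInf_mem hAset
  have ha0 : 0 < a := hA a haA
  -- membership in pmul
  have hmem : ∀ α ∈ A, ∀ x ∈ X, Nat.lcm α x ∈ pmul A X := by
    intro α hα x hx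
    simp only [pmul, Multiset.mem_bind, Multiset.mem_replicate]
    exact ⟨α, hα, x, hx, Nat.gcd_ne_zero_left (hA α hα).ne', rfl⟩
  have hmem' : ∀ y ∈ pmul A X, ∃ α ∈ A, ∃ x ∈ X, y = Nat.lcm α x := by
    intro y hy
    simp only [pmul, Multiset.mem_bind, Multiset.mem_replicate] at hy
    obtain ⟨α, hα, x, hx, _, rfl⟩ := hy
    exact ⟨α, hα, x, hx, rfl⟩
  -- L is in pmul A X
  have hPset : {y : ℕ | y ∈ pmul A X}.Nonempty := by
    obtain ⟨x, hx⟩ := Multiset.exists_mem_of_ne_zero hXne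
    exact ⟨Nat.lcm a x, hmem a haA x hx⟩
  have hLmem : L ∈ pmul A X := Nat.sInf_mem hPset
  obtain ⟨α, hα, x₀, hx₀, hLeq⟩ := hmem' L hLmem
  have hx₀0 : 0 < x₀ := hX x₀ hx₀
  have hL0 : 0 < L := hLeq ▸ Nat.pos_of_ne_zero (Nat.lcm_ne_zero (hA α hα).ne' hx₀0.ne')
  -- lcm a x₀ = L
  have hdvdL : Nat.lcm a x₀ ∣ L := hLeq ▸ lcm_dvd_lcm (hdvd α hα) dvd_rfl
  have hLle : L ≤ Nat.lcm a x₀ := Nat.sInf_le (hmem a haA x₀ hx₀)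
  have hlcmax₀ : Nat.lcm a x₀ = L := Nat.le_antisymm (Nat.le_of_dvd hL0 hdvdL) hLle
  have haL : a ∣ L := hlcmax₀ ▸ Nat.dvd_lcm_left a x₀
  refine ⟨haL, ?_⟩
  -- the anti-lcm m
  set m := alcm a L with hm_def
  have hSx₀ : x₀ ∈ {c : ℕ | 0 < c ∧ Nat.lcm a c = L} := ⟨hx₀0, hlcmax₀⟩
  have hmS : m ∈ {c : ℕ | 0 < c ∧ Nat.lcm a c = L} := Nat.sInf_mem ⟨x₀, hSx₀⟩
  obtain ⟨hm0, hlcmam⟩ := hmS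
  -- m divides x₀
  have hmx₀ : m ∣ x₀ := by
    have hg0 : 0 < Nat.gcd m x₀ := Nat.gcd_pos_of_pos_left x₀ hm0
    have hgS : Nat.gcd m x₀ ∈ {c : ℕ | 0 < c ∧ Nat.lcm a c = L} := by
      refine ⟨hg0, ?_⟩
      rw [lcm_gcd_distrib a m x₀ ha0.ne' hm0.ne' hx₀0.ne', hlcmam, hlcmax₀, Nat.gcd_self]
    have h1 : m ≤ Nat.gcd m x₀ := Nat.sInf_le hgS
    have h2 : Nat.gcd m x₀ ≤ m := Nat.le_of_dvd hm0 (Nat.gcd_dvd_left m x₀)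
    have : Nat.gcd m x₀ = m := Nat.le_antisymm h2 h1
    exact this ▸ Nat.gcd_dvd_right m x₀
  set d := x₀ / m with hd_def
  have hdm : d * m = x₀ := Nat.div_mul_cancel hmx₀
  have hd0 : 0 < d := by
    rcases Nat.eq_zero_or_pos d with h | h
    · rw [h, zero_mul] at hdm; omega
    · exact h
  -- factorization facts
  have hfL : ∀ p : ℕ, L.factorization p = max (a.factorization p) (m.factorization p) := by
    intro p
    rw [← hlcmam, Nat.factorization_lcm ha0.ne' hm0.ne', Finsupp.sup_apply]
  have hfLx : ∀ p : ℕ, L.factorization p = max (a.factorization p) (x₀.factorization p) := by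
    intro p
    rw [← hlcmax₀, Nat.factorization_lcm ha0.ne' hx₀0.ne', Finsupp.sup_apply]
  have hfx : ∀ p : ℕ, x₀.factorization p = d.factorization p + m.factorization p := by
    intro p
    rw [← hdm, Nat.factorization_mul hd0.ne' hm0.ne']
    rfl
  -- key claim: if p appears in m then the exponent in L exceeds that in a
  have key : ∀ p : ℕ, m.factorization p ≠ 0 →
      a.factorization p < L.factorization p := by
    intro p hp
    by_contra hle
    have hpp : p.Prime := by
      by_contra h
      exact hp (Nat.factorization_eq_zero_of_not_prime m h)
    have haL' : L.factorization p = a.factorization p := by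
      have := hfL p; omega
    -- ordCompl[p] m is a smaller element of the set
    set m' := ordCompl[p] m with hm'_def
    have hm'0 : 0 < m' := Nat.ordCompl_pos p hm0.ne'
    have hm'lt : m' < m := by
      apply Nat.div_lt_self hm0
      exact Nat.one_lt_pow hp hpp.one_lt
    have hfm' : m'.factorization = m.factorization.erase p :=
      Nat.factorization_ordCompl m p
    have hlcm' : Nat.lcm a m' = L := by
      have h1 : Nat.lcm a m' ≠ 0 := Nat.lcm_ne_zero ha0.ne' hm'0.ne'
      apply Nat.factorization_inj h1 hL0.ne'
      rw [Nat.factorization_lcm ha0.ne' hm'0.ne', hfm']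
      ext q
      rw [Finsupp.sup_apply]
      rcases eq_or_ne q p with rfl | hqp
      · rw [Finsupp.erase_same, haL']
        simp
      · rw [Finsupp.erase_ne hqp]
        exact (hfL q).symm
    have : m ≤ m' := Nat.sInf_le ⟨hm'0, hlcm'⟩
    omega
  -- coprimality
  have hcop : Nat.Coprime d m := by
    rw [Nat.coprime_iff_gcd_eq_one]
    by_contra hne
    obtain ⟨p, hpp, hpdvd⟩ := Nat.exists_prime_and_dvd hne
    have hpd : p ∣ d := hpdvd.trans (Nat.gcd_dvd_left d m)
    have hpm : p ∣ m := hpdvd.trans (Nat.gcd_dvd_right d m)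
    have h1 : 0 < m.factorization p := hpp.factorization_pos_of_dvd hm0.ne' hpm
    have h2 : 0 < d.factorization p := hpp.factorization_pos_of_dvd hd0.ne' hpd
    have h3 := key p h1.ne'
    have h4 := hfL p
    have h5 := hfLx p
    have h6 := hfx p
    omega
  refine ⟨d, ?_, hcop, hdm ▸ hx₀⟩
  -- d divides a
  rw [← Nat.factorization_le_iff_dvd hd0.ne' ha0.ne']
  intro p
  rcases Nat.eq_zero_or_pos (m.factorization p) with h | h
  · have h4 := hfL p
    have h5 := hfLx p
    have h6 := hfx p
    omega
  · have h3 := key p h.ne'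
    have h4 := hfL p
    have h5 := hfLx p
    have h6 := hfx p
    omega
end

section
/- Let A and X be permutations with A pseudo-cancelable and X nonempty, let B = A·X, and set m = alcm_{ℓ(A)} ℓ(B) (note that ℓ(A) divides ℓ(B)). Let d be a divisor of ℓ(A) that is coprime with m. Then for every divisor e of d, A·(X + {d·m}) = A·(X + e copies of the singleton {(d/e)·m}), where + denotes multiset union. -/
lemma replicate_bind (e k : ℕ) (g : ℕ → Multiset ℕ) :
    (Multiset.replicate e k).bind g = e • g k := by
  induction e with
  | zero => simp
  | succ n ih => simp [Multiset.replicate_succ, ih, succ_nsmul, add_comm]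

lemma pmul_add (A X Y : Multiset ℕ) : pmul A (X + Y) = pmul A X + pmul A Y := by
  simp [pmul, Multiset.add_bind, Multiset.bind_add]

lemma lcm_aux (a f m : ℕ) (hf : f ∣ a) (hc : Nat.Coprime f m) :
    Nat.lcm a (f * m) = Nat.lcm a m := by
  rw [← Nat.Coprime.lcm_eq_mul hc, ← Nat.lcm_assoc,
    Nat.dvd_antisymm (Nat.lcm_dvd dvd_rfl hf) (Nat.dvd_lcm_left a f)]

lemma gcd_aux (a d e m : ℕ) (ha : 0 < a) (hm : 0 < m) (hda : d ∣ a)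
    (hc : Nat.Coprime d m) (he : e ∣ d) :
    Nat.gcd a (d * m) = e * Nat.gcd a (d / e * m) := by
  have hde : d / e ∣ d := Nat.div_dvd_of_dvd he
  have hL : 0 < Nat.lcm a m := Nat.pos_of_ne_zero (Nat.lcm_ne_zero ha.ne' hm.ne')
  have h1 : Nat.gcd a (d * m) * Nat.lcm a m = a * (d * m) := by
    rw [← lcm_aux a d m hda hc]; exact Nat.gcd_mul_lcm _ _
  have h2 : Nat.gcd a (d / e * m) * Nat.lcm a m = a * (d / e * m) := by
    rw [← lcm_aux a (d / e) m (hde.trans hda) (Nat.Coprime.coprime_dvd_left hde hc)]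
    exact Nat.gcd_mul_lcm _ _
  have : Nat.gcd a (d * m) * Nat.lcm a m = e * Nat.gcd a (d / e * m) * Nat.lcm a m := by
    rw [h1, mul_assoc, h2, ← mul_assoc]
    conv_lhs => rw [← Nat.mul_div_cancel' he]
    ring
  exact Nat.eq_of_mul_eq_mul_right hL this

/-- let `A` be pseudo-cancelable, `X` a nonempty permutation, `B = A·X`,
`m' = alcm_{ℓ(A)} ℓ(B)`, and let `d ∣ ℓ(A)` be coprime with `m'`. Then for every divisor
`e` of `d`, `A·(X + {d·m'}) = A·(X + e copies of {(d/e)·m'})`. -/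
theorem exchange_cycles (A X : Multiset ℕ) (hA : IsPerm A) (hX : IsPerm X)
    (hpc : PseudoCancelable A) (hXne : X ≠ 0)
    (d : ℕ) (hd : d ∣ ell A)
    (hcop : Nat.Coprime d (alcm (ell A) (ell (pmul A X)))) :
    ∀ e : ℕ, e ∣ d →
      pmul A (X + {d * alcm (ell A) (ell (pmul A X))}) =
        pmul A (X + Multiset.replicate e (d / e * alcm (ell A) (ell (pmul A X)))) := by
  intro e he
  set m := alcm (ell A) (ell (pmul A X)) with hmdef
  by_cases hm : m = 0
  · have hd1 : d = 1 := by
      have := hcop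
      rw [hm, Nat.coprime_zero_right] at this
      exact this
    have he1 : e = 1 := Nat.dvd_one.mp (hd1 ▸ he)
    subst hd1; subst he1
    simp
  · have hm0 : 0 < m := Nat.pos_of_ne_zero hm
    have hAne : A ≠ 0 := hpc.1
    have hlmem : ell A ∈ A := by
      obtain ⟨x, hx⟩ := Multiset.exists_mem_of_ne_zero hAne
      exact Nat.sInf_mem (s := {y : ℕ | y ∈ A}) ⟨x, hx⟩
    have hl0 : 0 < ell A := hA _ hlmem
    have hd0 : 0 < d := Nat.pos_of_dvd_of_pos hd hl0
    rw [pmul_add, pmul_add]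
    congr 1
    unfold pmul
    refine Multiset.bind_congr fun a haA => ?_
    rw [Multiset.singleton_bind, replicate_bind, Multiset.nsmul_replicate]
    have hda : d ∣ a := dvd_trans hd (hpc.2 a haA)
    have hde : d / e ∣ d := Nat.div_dvd_of_dvd he
    rw [lcm_aux a d m hda hcop,
      lcm_aux a (d / e) m (hde.trans hda) (Nat.Coprime.coprime_dvd_left hde hcop),
      gcd_aux a d e m (hA a haA) hm0 hda hcop he]
end

section
/- Let A and B be permutations with A pseudo-cancelable, and suppose the equation A·X = B admits at least one solution X among the permutations. Then there exists a solution X* such that every solution Y satisfies card(Y) ≤ card(X*) (where card denotes the number of elements of the multiset counted with multiplicity), and X* is the unique solution of maximal cardinality. -/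
namespace MaxSolAux



def F (X : Multiset ℕ) (n : ℕ) : ℕ := (X.filter (· ∣ n)).sum
lemma F_add (s t : Multiset ℕ) (n : ℕ) : F (s + t) n = F s n + F t n := by
  simp [F, Multiset.filter_add]
lemma F_replicate (g l n : ℕ) : F (Multiset.replicate g l) n = if l ∣ n then g * l else 0 := by
  unfold F
  by_cases h : l ∣ n
  · rw [Multiset.filter_eq_self.2 (fun a ha => by rw [Multiset.eq_of_mem_replicate ha]; exact h)]
    simp [Multiset.sum_replicate, h]
  · rw [Multiset.filter_eq_nil.2 (fun a ha => by rw [Multiset.eq_of_mem_replicate ha]; exact h)]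
    simp [h]
lemma F_bind {α : Type*} (s : Multiset α) (t : α → Multiset ℕ) (n : ℕ) :
    F (s.bind t) n = (s.map fun a => F (t a) n).sum := by
  induction s using Multiset.induction with
  | empty => simp [F]
  | cons a s ih => simp [Multiset.cons_bind, F_add, ih]
lemma F_cons (a : ℕ) (s : Multiset ℕ) (n : ℕ) :
    F (a ::ₘ s) n = (if a ∣ n then a else 0) + F s n := by
  unfold F
  rw [Multiset.filter_cons]
  by_cases h : a ∣ n <;> simp [h]

lemma F_eq_sum_map (X : Multiset ℕ) (n : ℕ) :
    F X n = (X.map fun x => if x ∣ n then x else 0).sum := by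
  induction X using Multiset.induction with
  | empty => simp [F]
  | cons a s ih => simp [F_cons, ih]

lemma F_pmul (A X : Multiset ℕ) (n : ℕ) : F (pmul A X) n = F A n * F X n := by
  unfold pmul
  rw [F_bind]
  have h1 : ∀ a : ℕ, F (X.bind fun x => Multiset.replicate (Nat.gcd a x) (Nat.lcm a x)) n
      = (if a ∣ n then a else 0) * F X n := by
    intro a
    rw [F_bind, F_eq_sum_map, ← Multiset.sum_map_mul_left]
    congr 1
    apply Multiset.map_congr rfl
    intro x _
    rw [F_replicate]
    by_cases ha : a ∣ n <;> by_cases hx : x ∣ n <;>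
      simp [ha, hx, Nat.lcm_dvd_iff, Nat.gcd_mul_lcm]
  calc (A.map fun a => F (X.bind fun x => Multiset.replicate (Nat.gcd a x) (Nat.lcm a x)) n).sum
      = (A.map fun a => (if a ∣ n then a else 0) * F X n).sum := by
        apply congrArg; exact Multiset.map_congr rfl (fun a _ => h1 a)
    _ = (A.map fun a => if a ∣ n then a else 0).sum * F X n := Multiset.sum_map_mul_right
    _ = F A n * F X n := by rw [← F_eq_sum_map]

lemma F_eq_sum_divisors (X : Multiset ℕ) (n : ℕ) (hn : n ≠ 0) :
    F X n = ∑ d ∈ n.divisors, X.count d * d := by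
  induction X using Multiset.induction with
  | empty => simp [F]
  | cons a s ih =>
    rw [F_cons, ih]
    have : ∀ d ∈ n.divisors, (a ::ₘ s).count d * d = s.count d * d + (if d = a then d else 0) := by
      intro d _
      rw [Multiset.count_cons]
      by_cases h : d = a <;> simp [h, add_mul]
    rw [Finset.sum_congr rfl this, Finset.sum_add_distrib, Finset.sum_ite_eq' n.divisors a (fun d => d)]
    have : a ∈ n.divisors ↔ a ∣ n ∧ n ≠ 0 := Nat.mem_divisors
    by_cases h : a ∣ n <;> simp [Nat.mem_divisors, h, hn, add_comm]

lemma F_inj (X Y : Multiset ℕ) (hX : ∀ x ∈ X, 0 < x) (hY : ∀ y ∈ Y, 0 < y)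
    (h : ∀ n, F X n = F Y n) : X = Y := by
  ext n
  induction n using Nat.strong_induction_on with
  | _ n ih =>
    rcases Nat.eq_zero_or_pos n with rfl | hn
    · rw [Multiset.count_eq_zero.2 (fun hc => lt_irrefl 0 (hX 0 hc)),
        Multiset.count_eq_zero.2 (fun hc => lt_irrefl 0 (hY 0 hc))]
    · have hd := h n
      rw [F_eq_sum_divisors X n hn.ne', F_eq_sum_divisors Y n hn.ne'] at hd
      have hmem : n ∈ n.divisors := Nat.mem_divisors_self n hn.ne'
      rw [← Finset.add_sum_erase _ _ hmem, ← Finset.add_sum_erase _ _ hmem] at hd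
      have hsum : ∑ d ∈ n.divisors.erase n, X.count d * d
          = ∑ d ∈ n.divisors.erase n, Y.count d * d := by
        apply Finset.sum_congr rfl
        intro d hdm
        have hne := Finset.ne_of_mem_erase hdm
        have hdvd := (Nat.mem_divisors.1 (Finset.mem_of_mem_erase hdm)).1
        have : d < n := lt_of_le_of_ne (Nat.le_of_dvd hn hdvd) hne
        rw [ih d this]
      rw [hsum] at hd
      have := Nat.add_right_cancel hd
      exact Nat.eq_of_mul_eq_mul_right hn this


/-- the "reduced part" of x w.r.t. l: keep only prime powers exceeding those of l. -/
def rdc (l x : ℕ) : ℕ :=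
  x.factorization.prod fun p e => if l.factorization p < e then p ^ e else 1

def kpart (l x : ℕ) : ℕ :=
  x.factorization.prod fun p e => if l.factorization p < e then 1 else p ^ e

lemma kpart_mul_rdc (l x : ℕ) (hx : x ≠ 0) : kpart l x * rdc l x = x := by
  unfold kpart rdc
  rw [← Finsupp.prod_mul]
  have : (x.factorization.prod fun p e =>
      (if l.factorization p < e then 1 else p ^ e) * if l.factorization p < e then p ^ e else 1)
      = x.factorization.prod fun p e => p ^ e := by
    apply Finsupp.prod_congr
    intro p _
    split_ifs <;> ring
  rw [this, Nat.factorization_prod_pow_eq_self hx]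

lemma rdc_ne_zero (l x : ℕ) (hx : x ≠ 0) : rdc l x ≠ 0 :=
  fun h => hx (by rw [← kpart_mul_rdc l x hx, h, mul_zero])

lemma kpart_ne_zero (l x : ℕ) (hx : x ≠ 0) : kpart l x ≠ 0 :=
  fun h => hx (by rw [← kpart_mul_rdc l x hx, h, zero_mul])

lemma rdc_factorization (l x : ℕ) (hx : x ≠ 0) (p : ℕ) :
    (rdc l x).factorization p
      = if l.factorization p < x.factorization p then x.factorization p else 0 := by
  unfold rdc
  rw [Finsupp.prod]
  rw [Nat.factorization_prod (fun q hq => by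
    split_ifs with h
    · exact pow_ne_zero _ (Nat.prime_of_mem_primeFactors
        (by rwa [← Nat.support_factorization])).ne_zero
    · exact one_ne_zero)]
  rw [Finset.sum_apply']
  by_cases hp : p ∈ x.factorization.support
  · have hpp : p.Prime := Nat.prime_of_mem_primeFactors (by rwa [← Nat.support_factorization])
    rw [Finset.sum_eq_single_of_mem p hp]
    · split_ifs with h
      · rw [Nat.Prime.factorization_pow hpp, Finsupp.single_eq_same]
      · simp
    · intro q hq hqp
      have hqpr : q.Prime := Nat.prime_of_mem_primeFactors (by rwa [← Nat.support_factorization])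
      split_ifs with h
      · rw [Nat.Prime.factorization_pow hqpr, Finsupp.single_eq_of_ne' hqp]
      · simp
  · have h0 : x.factorization p = 0 := Finsupp.notMem_support_iff.1 hp
    rw [h0]
    simp only [Nat.not_lt_zero, if_neg (by omega : ¬ l.factorization p < 0)]
    apply Finset.sum_eq_zero
    intro q hq
    have hqpr : q.Prime := Nat.prime_of_mem_primeFactors (by rwa [← Nat.support_factorization])
    have hqp : q ≠ p := fun h => hp (h ▸ hq)
    split_ifs with h
    · rw [Nat.Prime.factorization_pow hqpr, Finsupp.single_eq_of_ne' hqp]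
    · simp

lemma kpart_factorization (l x : ℕ) (hx : x ≠ 0) (p : ℕ) :
    (kpart l x).factorization p
      = if l.factorization p < x.factorization p then 0 else x.factorization p := by
  have h := Nat.factorization_mul (kpart_ne_zero l x hx) (rdc_ne_zero l x hx)
  rw [kpart_mul_rdc l x hx] at h
  have := congrArg (fun f => f p) h
  simp only [Finsupp.add_apply] at this
  rw [rdc_factorization l x hx p] at this
  split_ifs at this ⊢ with hc
  · omega
  · omega

lemma rdc_dvd (l x : ℕ) (hx : x ≠ 0) : rdc l x ∣ x :=
  ⟨kpart l x, (kpart_mul_rdc l x hx).symm.trans (mul_comm _ _)⟩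

lemma kpart_dvd_l (l x : ℕ) (hx : x ≠ 0) (hl : l ≠ 0) : kpart l x ∣ l := by
  rw [← Nat.factorization_le_iff_dvd (kpart_ne_zero l x hx) hl]
  intro p
  rw [kpart_factorization l x hx p]
  split_ifs with h
  · exact Nat.zero_le _
  · omega

/-- key dvd transfer: if l ∣ n then x ∣ n ↔ rdc l x ∣ n. -/
lemma dvd_iff_rdc_dvd (l x n : ℕ) (hx : x ≠ 0) (hl : l ≠ 0) (hn : l ∣ n) :
    x ∣ n ↔ rdc l x ∣ n := by
  constructor
  · exact fun h => (rdc_dvd l x hx).trans h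
  · intro h
    rcases Nat.eq_zero_or_pos n with rfl | hn0
    · exact dvd_zero x
    rw [← Nat.factorization_le_iff_dvd hx hn0.ne']
    intro p
    have h1 : (rdc l x).factorization p ≤ n.factorization p :=
      (Nat.factorization_le_iff_dvd (rdc_ne_zero l x hx) hn0.ne').2 h p
    have h2 : l.factorization p ≤ n.factorization p :=
      (Nat.factorization_le_iff_dvd hl hn0.ne').2 hn p
    rw [rdc_factorization l x hx p] at h1
    split_ifs at h1 with hc
    · exact h1
    · omega

/-- Reducedness of an element. -/
def Reduced (l y : ℕ) : Prop :=
  ∀ p : ℕ, l.factorization p < y.factorization p ∨ y.factorization p = 0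

lemma rdc_reduced (l x : ℕ) (hx : x ≠ 0) : Reduced l (rdc l x) := by
  intro p
  rw [rdc_factorization l x hx p]
  split_ifs with h
  · exact Or.inl h
  · exact Or.inr rfl

lemma reduced_dvd_of_dvd_lcm (l y n : ℕ) (hl : l ≠ 0) (hy : y ≠ 0)
    (hred : Reduced l y) (h : y ∣ Nat.lcm n l) : y ∣ n := by
  rcases Nat.eq_zero_or_pos n with rfl | hn0
  · exact dvd_zero y
  have hlcm : Nat.lcm n l ≠ 0 := Nat.lcm_ne_zero hn0.ne' hl
  rw [← Nat.factorization_le_iff_dvd hy hn0.ne']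
  intro p
  have h1 : y.factorization p ≤ (Nat.lcm n l).factorization p :=
    (Nat.factorization_le_iff_dvd hy hlcm).2 h p
  rw [Nat.factorization_lcm hn0.ne' hl] at h1
  rw [Finsupp.sup_apply] at h1
  rcases hred p with hr | hr
  · have : y.factorization p ≤ n.factorization p ⊔ l.factorization p := h1
    change y.factorization p ≤ max (n.factorization p) (l.factorization p) at this
    omega
  · omega

lemma kpart_eq_one_iff (l x : ℕ) (hx : x ≠ 0) : kpart l x = 1 → rdc l x = x := by
  intro h
  have := kpart_mul_rdc l x hx
  rwa [h, one_mul] at this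



lemma F_def (X : Multiset ℕ) (n : ℕ) : F X n = (X.filter (· ∣ n)).sum := rfl

/-! ### glue -/

lemma le_sum_of_mem {s : Multiset ℕ} {a : ℕ} (h : a ∈ s) : a ≤ s.sum := by
  obtain ⟨t, rfl⟩ := Multiset.exists_cons_of_mem h
  rw [Multiset.sum_cons]
  exact Nat.le_add_right _ _

lemma sum_map_le {α : Type*} (s : Multiset α) (f g : α → ℕ) (h : ∀ x ∈ s, f x ≤ g x) :
    (s.map f).sum ≤ (s.map g).sum := by
  induction s using Multiset.induction with
  | empty => simp
  | cons a s ih =>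
    simp only [Multiset.map_cons, Multiset.sum_cons]
    exact Nat.add_le_add (h a (Multiset.mem_cons_self a s))
      (ih fun x hx => h x (Multiset.mem_cons_of_mem hx))

lemma map_eq_one_of_sum_le {α : Type*} (s : Multiset α) (f : α → ℕ)
    (h1 : ∀ x ∈ s, 1 ≤ f x) (h2 : (s.map f).sum ≤ Multiset.card s) :
    ∀ x ∈ s, f x = 1 := by
  induction s using Multiset.induction with
  | empty => simp
  | cons a s ih =>
    simp only [Multiset.map_cons, Multiset.sum_cons, Multiset.card_cons] at h2
    have hs : Multiset.card s ≤ (s.map f).sum := by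
      have := sum_map_le s (fun _ => 1) f (fun x hx => h1 x (Multiset.mem_cons_of_mem hx))
      simpa using this
    have ha : f a = 1 := by
      have := h1 a (Multiset.mem_cons_self a s)
      omega
    intro x hx
    rcases Multiset.mem_cons.1 hx with rfl | hx'
    · exact ha
    · exact ih (fun y hy => h1 y (Multiset.mem_cons_of_mem hy)) (by omega) x hx'

lemma IsPerm_pmul {A X : Multiset ℕ} (hA : IsPerm A) (hX : IsPerm X) : IsPerm (pmul A X) := by
  intro b hb
  unfold pmul at hb
  obtain ⟨a, ha, hb⟩ := Multiset.mem_bind.1 hb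
  obtain ⟨x, hx, hb⟩ := Multiset.mem_bind.1 hb
  rw [Multiset.eq_of_mem_replicate hb]
  exact Nat.pos_of_ne_zero (Nat.lcm_ne_zero (hA a ha).ne' (hX x hx).ne')

lemma card_le_card_pmul {A X : Multiset ℕ} (hA : IsPerm A) (hX : IsPerm X) (hA0 : A ≠ 0) :
    Multiset.card X ≤ Multiset.card (pmul A X) := by
  obtain ⟨a0, ha0⟩ := Multiset.exists_mem_of_ne_zero hA0
  unfold pmul
  rw [Multiset.card_bind]
  have hinner : ∀ a ∈ A, Multiset.card X ≤
      (Multiset.card ∘ fun a => X.bind fun b => Multiset.replicate (Nat.gcd a b) (Nat.lcm a b)) a := by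
    intro a ha
    simp only [Function.comp, Multiset.card_bind, Multiset.map_map]
    calc Multiset.card X = (X.map fun _ => 1).sum := by simp
      _ ≤ (X.map fun b => (Multiset.card ∘ fun b => Multiset.replicate (Nat.gcd a b) (Nat.lcm a b)) b).sum := by
          apply sum_map_le
          intro x hx
          simp only [Function.comp, Multiset.card_replicate]
          exact Nat.gcd_pos_of_pos_left _ (hA a ha)
  calc Multiset.card X ≤ (Multiset.card ∘ fun a => X.bind fun b =>
        Multiset.replicate (Nat.gcd a b) (Nat.lcm a b)) a0 := hinner a0 ha0
    _ ≤ _ := le_sum_of_mem (Multiset.mem_map_of_mem _ ha0)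

/-- The reduction of a solution. -/
noncomputable def reduceM (l : ℕ) (X : Multiset ℕ) : Multiset ℕ :=
  X.bind fun x => Multiset.replicate (kpart l x) (rdc l x)

lemma mem_reduceM {l : ℕ} {X : Multiset ℕ} {y : ℕ} (h : y ∈ reduceM l X) :
    ∃ x ∈ X, y = rdc l x := by
  obtain ⟨x, hx, hy⟩ := Multiset.mem_bind.1 h
  exact ⟨x, hx, Multiset.eq_of_mem_replicate hy⟩

lemma IsPerm_reduceM {l : ℕ} {X : Multiset ℕ} (hX : IsPerm X) : IsPerm (reduceM l X) := by
  intro y hy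
  obtain ⟨x, hx, rfl⟩ := mem_reduceM hy
  exact Nat.pos_of_ne_zero (rdc_ne_zero l x (hX x hx).ne')

lemma reduceM_reduced {l : ℕ} {X : Multiset ℕ} (hX : IsPerm X) :
    ∀ y ∈ reduceM l X, Reduced l y := by
  intro y hy
  obtain ⟨x, hx, rfl⟩ := mem_reduceM hy
  exact rdc_reduced l x (hX x hx).ne'

lemma card_reduceM {l : ℕ} {X : Multiset ℕ} :
    Multiset.card (reduceM l X) = (X.map fun x => kpart l x).sum := by
  unfold reduceM
  rw [Multiset.card_bind]
  congr 1
  apply Multiset.map_congr rfl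
  intro x _
  simp [Multiset.card_replicate]

lemma card_le_reduceM {l : ℕ} {X : Multiset ℕ} (hX : IsPerm X) :
    Multiset.card X ≤ Multiset.card (reduceM l X) := by
  rw [card_reduceM]
  calc Multiset.card X = (X.map fun _ => 1).sum := by simp
    _ ≤ _ := sum_map_le _ _ _ fun x hx =>
        Nat.one_le_iff_ne_zero.2 (kpart_ne_zero l x (hX x hx).ne')

lemma reduceM_eq_self {l : ℕ} {X : Multiset ℕ} (hX : IsPerm X)
    (h : Multiset.card (reduceM l X) = Multiset.card X) : reduceM l X = X := by
  have hall : ∀ x ∈ X, kpart l x = 1 := by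
    apply map_eq_one_of_sum_le X (fun x => kpart l x)
      (fun x hx => Nat.one_le_iff_ne_zero.2 (kpart_ne_zero l x (hX x hx).ne'))
    rw [← card_reduceM, h]
  unfold reduceM
  have : (X.bind fun x => Multiset.replicate (kpart l x) (rdc l x))
      = X.bind fun x => {x} := by
    apply Multiset.bind_congr
    intro x hx
    rw [hall x hx, kpart_eq_one_iff l x (hX x hx).ne' (hall x hx)]
    rfl
  rw [this, Multiset.bind_singleton (f := fun x => x), Multiset.map_id']

lemma exists_dvd_of_F_ne_zero {A : Multiset ℕ} {n : ℕ} (h : F A n ≠ 0) :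
    ∃ a ∈ A, a ∣ n := by
  by_contra hc
  push_neg at hc
  apply h
  rw [F_def, Multiset.filter_eq_nil.2 (fun a ha hd => hc a ha hd)]
  rfl

lemma F_reduceM {l : ℕ} {X : Multiset ℕ} (hl : l ≠ 0) (hX : IsPerm X) {n : ℕ} (hn : l ∣ n) :
    F (reduceM l X) n = F X n := by
  unfold reduceM
  rw [F_bind, F_eq_sum_map]
  congr 1
  apply Multiset.map_congr rfl
  intro x hx
  have hx0 : x ≠ 0 := (hX x hx).ne'
  rw [F_replicate]
  by_cases hr : rdc l x ∣ n
  · rw [if_pos hr, if_pos ((dvd_iff_rdc_dvd l x n hx0 hl hn).2 hr), kpart_mul_rdc l x hx0]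
  · rw [if_neg hr, if_neg (fun hd => hr ((dvd_iff_rdc_dvd l x n hx0 hl hn).1 hd))]

lemma pmul_reduceM {A X : Multiset ℕ} (hA : IsPerm A) (hX : IsPerm X)
    {l : ℕ} (hl : l ≠ 0) (hdvd : ∀ a ∈ A, l ∣ a) :
    pmul A (reduceM l X) = pmul A X := by
  apply F_inj _ _ (IsPerm_pmul hA (IsPerm_reduceM hX)) (IsPerm_pmul hA hX)
  intro n
  rw [F_pmul, F_pmul]
  by_cases hFA : F A n = 0
  · rw [hFA, zero_mul, zero_mul]
  · obtain ⟨a, ha, han⟩ := exists_dvd_of_F_ne_zero hFA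
    rw [F_reduceM hl hX ((hdvd a ha).trans han)]

/-- Uniqueness among reduced solutions. -/
lemma reduced_unique {A Y Z : Multiset ℕ} (hY : IsPerm Y) (hZ : IsPerm Z)
    {l : ℕ} (hl : 0 < l) (hlA : l ∈ A)
    (hYr : ∀ y ∈ Y, Reduced l y) (hZr : ∀ z ∈ Z, Reduced l z)
    (h : pmul A Y = pmul A Z) : Y = Z := by
  apply F_inj _ _ hY hZ
  intro n
  have hFA : 0 < F A (Nat.lcm n l) := by
    rw [F_def]
    have : l ∈ (A.filter (· ∣ Nat.lcm n l)) :=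
      Multiset.mem_filter.2 ⟨hlA, Nat.dvd_lcm_right n l⟩
    exact lt_of_lt_of_le hl (le_sum_of_mem this)
  have key : ∀ (W : Multiset ℕ), IsPerm W → (∀ w ∈ W, Reduced l w) →
      F W n = F W (Nat.lcm n l) := by
    intro W hW hWr
    rw [F_def, F_def]
    congr 1
    apply Multiset.filter_congr
    intro w hw
    constructor
    · exact fun hd => hd.trans (Nat.dvd_lcm_left n l)
    · exact fun hd => reduced_dvd_of_dvd_lcm l w n hl.ne' (hW w hw).ne' (hWr w hw) hd
  rw [key Y hY hYr, key Z hZ hZr]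
  have hp : F A (Nat.lcm n l) * F Y (Nat.lcm n l) = F A (Nat.lcm n l) * F Z (Nat.lcm n l) := by
    rw [← F_pmul, ← F_pmul, h]
  exact Nat.eq_of_mul_eq_mul_left hFA hp


end MaxSolAux

open MaxSolAux in
/-- if `A` is pseudo-cancelable and `A·X = B` has a solution among the
permutations, then there is a solution `X*` of maximal cardinality, and it is the unique
solution of maximal cardinality. -/
theorem max_components_solution (A B : Multiset ℕ) (hA : IsPerm A) (hB : IsPerm B)
    (hpc : PseudoCancelable A) (hsol : ∃ X : Multiset ℕ, IsPerm X ∧ pmul A X = B) :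
    ∃ Xstar : Multiset ℕ, IsPerm Xstar ∧ pmul A Xstar = B ∧
      (∀ Y : Multiset ℕ, IsPerm Y → pmul A Y = B →
        Multiset.card Y ≤ Multiset.card Xstar) ∧
      (∀ Y : Multiset ℕ, IsPerm Y → pmul A Y = B →
        Multiset.card Y = Multiset.card Xstar → Y = Xstar) := by
  obtain ⟨hA0, hdvd⟩ := hpc
  have hlA : ell A ∈ A := by
    have : {x : ℕ | x ∈ A}.Nonempty := by
      obtain ⟨a, ha⟩ := Multiset.exists_mem_of_ne_zero hA0
      exact ⟨a, ha⟩
    exact Nat.sInf_mem this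
  set l := ell A with hldef
  have hl0 : 0 < l := hA l hlA
  set S : Set ℕ := {n | ∃ X, IsPerm X ∧ pmul A X = B ∧ Multiset.card X = n} with hSdef
  have hSne : S.Nonempty := by
    obtain ⟨X, hX1, hX2⟩ := hsol
    exact ⟨Multiset.card X, X, hX1, hX2, rfl⟩
  have hSbdd : BddAbove S := by
    refine ⟨Multiset.card B, ?_⟩
    rintro n ⟨X, hX1, hX2, rfl⟩
    rw [← hX2]
    exact card_le_card_pmul hA hX1 hA0
  obtain ⟨X0, hX0p, hX0e, hX0c⟩ := Nat.sSup_mem hSne hSbdd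
  -- the candidate
  refine ⟨reduceM l X0, IsPerm_reduceM hX0p, ?_, ?_, ?_⟩
  · rw [pmul_reduceM hA hX0p hl0.ne' hdvd, hX0e]
  all_goals {
    have hstar : Multiset.card (reduceM l X0) = sSup S := by
      apply le_antisymm
      · apply le_csSup hSbdd
        exact ⟨reduceM l X0, IsPerm_reduceM hX0p,
          by rw [pmul_reduceM hA hX0p hl0.ne' hdvd, hX0e], rfl⟩
      · rw [← hX0c]; exact card_le_reduceM hX0p
    first
    | {intro Y hY1 hY2
       rw [hstar]
       exact le_csSup hSbdd ⟨Y, hY1, hY2, rfl⟩}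
    | {intro Y hY1 hY2 hYc
       have hYred : Multiset.card (reduceM l Y) ≤ sSup S := by
         apply le_csSup hSbdd
         exact ⟨reduceM l Y, IsPerm_reduceM hY1,
           by rw [pmul_reduceM hA hY1 hl0.ne' hdvd, hY2], rfl⟩
       have hle : Multiset.card Y ≤ Multiset.card (reduceM l Y) := card_le_reduceM hY1
       have hceq : Multiset.card (reduceM l Y) = Multiset.card Y := by omega
       have hYeq : reduceM l Y = Y := reduceM_eq_self hY1 hceq
       apply reduced_unique hY1 (IsPerm_reduceM hX0p) hl0 hlA
       · intro y hy
         rw [← hYeq] at hy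
         exact reduceM_reduced hY1 y hy
       · exact reduceM_reduced hX0p
       · rw [hY2, pmul_reduceM hA hX0p hl0.ne' hdvd, hX0e]}
  }
end
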